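/- arXiv:1303.5550 — 7 statements merged into one kernel-verified Lean document; each statement's English description precedes it below -/
import Mathlib

section
/- For every ω ∈ ℂ, the function z ↦ e^{iωz}/sin(z) admits no meromorphic antiderivative on ℂ; that is, there is no F : ℂ → ℂ, meromorphic at every point of ℂ, with complex derivative e^{iωz}/sin(z) at every z ∈ ℂ with sin(z) ≠ 0. -/
open Complex Metric Set intervalIntegral

/-- For every `ω ∈ ℂ`, the function `z ↦ e^{iωz}/sin z` admits no meromorphic
antiderivative on `ℂ`. -/
theorem stmt_2 (ω : ℂ) :
    ¬ ∃ F : ℂ → ℂ, (∀ z : ℂ, MeromorphicAt F z) ∧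
      ∀ z : ℂ, Complex.sin z ≠ 0 →
        HasDerivAt F (Complex.exp (Complex.I * ω * z) / Complex.sin z) z := by
  rintro ⟨F, -, hF⟩
  set π := Real.pi with hπ
  set r : ℝ := π / 2 with hr
  have hrpos : 0 < r := by positivity
  set h : ℂ → ℂ := fun z => Complex.exp (Complex.I * ω * z) / Complex.sin z with hh
  -- sin is nonzero on the punctured closed ball of radius r
  have hsin : ∀ z : ℂ, z ≠ 0 → ‖z‖ ≤ r → Complex.sin z ≠ 0 := by
    intro z hz hzr hs
    rw [Complex.sin_eq_zero_iff] at hs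
    obtain ⟨k, rfl⟩ := hs
    have hk : k ≠ 0 := by rintro rfl; simp at hz
    have h1 : (1 : ℝ) ≤ |(k : ℝ)| := by
      rw [← Int.cast_abs]
      exact_mod_cast Int.one_le_abs hk
    have : ‖(k : ℂ) * (π : ℂ)‖ = |(k : ℝ)| * π := by
      simp [abs_of_pos Real.pi_pos, hπ, Real.pi_pos.le]
    rw [this] at hzr
    nlinarith [Real.pi_pos]
  -- the dslope of sin at 0
  set s : ℂ → ℂ := dslope Complex.sin 0 with hsdef
  have hs0 : s 0 = 1 := by
    rw [hsdef, dslope_same, Complex.deriv_sin, Complex.cos_zero]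
  have hsne : ∀ z : ℂ, z ≠ 0 → s z = Complex.sin z / z := by
    intro z hz
    rw [hsdef, dslope_of_ne _ hz, slope_def_field]
    simp
  have hsa : AnalyticAt ℂ s 0 := by
    obtain ⟨p, hp⟩ := (Complex.differentiable_sin.analyticAt (0 : ℂ))
    exact ⟨_, hp.has_fpower_series_dslope_fslope⟩
  set g : ℂ → ℂ := fun z => Complex.exp (Complex.I * ω * z) / s z with hg
  have hg0 : g 0 = 1 := by simp [hg, hs0]
  -- g is differentiable on the closed ball
  have hgd : ∀ z ∈ closedBall (0 : ℂ) r, DifferentiableAt ℂ g z := by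
    intro z hz
    rw [mem_closedBall_zero_iff] at hz
    have hexp : DifferentiableAt ℂ (fun w : ℂ => Complex.exp (Complex.I * ω * w)) z :=
      ((differentiable_const _).mul differentiable_id).cexp z
    rcases eq_or_ne z 0 with rfl | hz0
    · have : AnalyticAt ℂ g 0 := by
        refine AnalyticAt.div ?_ hsa (by rw [hs0]; exact one_ne_zero)
        exact ((analyticAt_const.mul (analyticAt_id)).cexp)
      exact this.differentiableAt
    · have hsz : DifferentiableAt ℂ s z := by
        have heq : (fun w : ℂ => Complex.sin w / w) =ᶠ[nhds z] s := by
          filter_upwards [isOpen_ne.eventually_mem (show z ∈ {w : ℂ | w ≠ 0} from hz0)]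
            with w hw
          exact (hsne w hw).symm
        exact (Complex.differentiableAt_sin.div differentiableAt_id hz0).congr_of_eventuallyEq
          heq.symm
      have hszne : s z ≠ 0 := by
        rw [hsne z hz0]
        exact div_ne_zero (hsin z hz0 hz) hz0
      exact hexp.div hsz hszne
  -- Cauchy integral formula
  have hcauchy : (∮ z in C((0 : ℂ), r), (z - 0)⁻¹ • g z) = (2 * ↑π * Complex.I : ℂ) • g 0 := by
    refine Complex.circleIntegral_sub_inv_smul_of_differentiable_on_off_countable
      countable_empty (mem_ball_self hrpos) ?_ ?_
    · exact fun z hz => (hgd z hz).continuousAt.continuousWithinAt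
    · exact fun z hz => hgd z (ball_subset_closedBall hz.1)
  have hcirc : ∀ θ : ℝ, circleMap 0 r θ ≠ 0 ∧ Complex.sin (circleMap 0 r θ) ≠ 0 := by
    intro θ
    have habs : ‖circleMap 0 r θ‖ = r := by
      rw [norm_circleMap_zero, abs_of_pos hrpos]
    have hne : circleMap 0 r θ ≠ 0 := by
      intro hc; rw [hc] at habs; simp at habs; exact hrpos.ne' habs.symm
    exact ⟨hne, hsin _ hne habs.le⟩
  -- the circle integral of h equals 2πi
  have heq : (∮ z in C((0 : ℂ), r), h z) = (2 * ↑π * Complex.I : ℂ) := by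
    have : (∮ z in C((0 : ℂ), r), h z) = ∮ z in C((0 : ℂ), r), (z - 0)⁻¹ • g z := by
      refine circleIntegral.integral_congr hrpos.le ?_
      intro z hz
      rw [mem_sphere_zero_iff_norm] at hz
      have hz0 : z ≠ 0 := by intro hc; rw [hc] at hz; simp at hz; exact hrpos.ne' hz.symm
      have hsz : Complex.sin z ≠ 0 := hsin z hz0 (le_of_eq (by simpa using hz))
      simp only [hh, hg, sub_zero, smul_eq_mul, hsne z hz0]
      field_simp
    rw [this, hcauchy, hg0, smul_eq_mul, mul_one]
  -- FTC: the circle integral of h is zero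
  have hzero : (∮ z in C((0 : ℂ), r), h z) = 0 := by
    have hd : ∀ θ ∈ uIcc (0 : ℝ) (2 * π),
        HasDerivAt (fun t => F (circleMap 0 r t))
          (circleMap 0 r θ * Complex.I * h (circleMap 0 r θ)) θ := by
      intro θ _
      have h1 : HasDerivAt F (h (circleMap 0 r θ)) (circleMap 0 r θ) :=
        hF _ (hcirc θ).2
      have h2 := hasDerivAt_circleMap 0 r θ
      have := h1.comp θ h2
      simpa [mul_comm, Function.comp_def] using this
    have hcont : Continuous fun θ : ℝ =>
        circleMap 0 r θ * Complex.I * h (circleMap 0 r θ) := by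
      apply Continuous.mul (by continuity)
      exact ((Complex.continuous_exp.comp (by continuity)).div
        (Complex.continuous_sin.comp (continuous_circleMap 0 r))
        fun θ => (hcirc θ).2)
    have hint := intervalIntegral.integral_eq_sub_of_hasDerivAt hd
      (hcont.intervalIntegrable 0 (2 * π))
    have hper : circleMap 0 r (2 * π) = circleMap 0 r 0 := by
      simpa using (periodic_circleMap 0 r 0)
    rw [hper, sub_self] at hint
    rw [circleIntegral]
    simp only [deriv_circleMap, smul_eq_mul]
    exact hint
  rw [hzero] at heq
  have : (2 * ↑π * Complex.I : ℂ) ≠ 0 := by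
    simp [Real.pi_ne_zero, Complex.I_ne_zero]
    exact Real.pi_ne_zero
  exact this heq.symm
end

section
/- For ω ∈ ℂ, the function z ↦ e^{iωz}/sin²(z) admits a meromorphic antiderivative on ℂ if and only if ω = 0 (in which case F(z) = −cot(z) = −cos(z)/sin(z) is such an antiderivative). -/
open Complex Filter
open scoped Topology

/-- Extension of an eventual vanishing on a punctured neighborhood to a full neighborhood,
for a function continuous at the point. -/
private lemma ext_zero {A : ℂ → ℂ} (hA : ContinuousAt A 0)
    (h : ∀ᶠ z in 𝓝[≠] (0 : ℂ), A z = 0) : ∀ᶠ z in 𝓝 (0 : ℂ), A z = 0 := by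
  have h0 : A 0 = 0 := by
    have t1 : Filter.Tendsto A (𝓝[≠] (0 : ℂ)) (𝓝 (A 0)) :=
      (hA.continuousWithinAt (s := {(0 : ℂ)}ᶜ)).tendsto
    have t2 : Filter.Tendsto A (𝓝[≠] (0 : ℂ)) (𝓝 0) := by
      have hEq : A =ᶠ[𝓝[≠] (0 : ℂ)] (fun _ => (0 : ℂ)) := h
      exact Filter.Tendsto.congr' hEq.symm tendsto_const_nhds
    exact tendsto_nhds_unique t1 t2
  rw [eventually_nhdsWithin_iff] at h
  filter_upwards [h] with z hz
  rcases eq_or_ne z 0 with rfl | hz0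
  · exact h0
  · exact hz hz0

private lemma analyticAt_deriv {f : ℂ → ℂ} (hf : AnalyticAt ℂ f 0) :
    AnalyticAt ℂ (deriv f) 0 := by
  obtain ⟨s, hs, hfs⟩ := hf.eventually_analyticAt.exists_mem
  exact (AnalyticOnNhd.deriv (fun y hy => hfs y hy)) 0 (mem_of_mem_nhds hs)

private lemma dslope_analyticAt {f : ℂ → ℂ} (hf : AnalyticAt ℂ f 0) :
    AnalyticAt ℂ (dslope f 0) 0 := by
  obtain ⟨p, hp⟩ := hf
  exact hp.has_fpower_series_dslope_fslope.analyticAt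

/-- Key lemma: if `z * G' z = n * G z + z ^ n * g z` near `0` with `G`, `g` analytic,
then `g 0 = 0`. -/
private lemma key : ∀ (n : ℕ) (G g : ℂ → ℂ), AnalyticAt ℂ G 0 → AnalyticAt ℂ g 0 →
    (∀ᶠ z in 𝓝 (0 : ℂ), z * deriv G z = (n : ℂ) * G z + z ^ n * g z) → g 0 = 0 := by
  intro n
  induction n with
  | zero =>
    intro G g hG hg h
    have h0 := h.self_of_nhds
    simpa using h0.symm
  | succ n ih =>
    intro G g hG hg h
    have hG0 : G 0 = 0 := by
      have h0 := h.self_of_nhds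
      have hzp : (0 : ℂ) ^ (n + 1) = 0 := by simp
      rw [zero_mul, hzp, zero_mul, add_zero] at h0
      have hne : ((n + 1 : ℕ) : ℂ) ≠ 0 := Nat.cast_ne_zero.mpr (Nat.succ_ne_zero n)
      exact (mul_eq_zero.mp h0.symm).resolve_left hne
    set G₁ : ℂ → ℂ := dslope G 0 with hG₁def
    have hG₁ : AnalyticAt ℂ G₁ 0 := dslope_analyticAt hG
    have hfac : ∀ z, G z = z * G₁ z := by
      intro z
      rcases eq_or_ne z 0 with rfl | hz
      · simp [hG0]
      · rw [hG₁def, dslope_of_ne _ hz, slope_def_field, hG0, sub_zero, sub_zero]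
        field_simp
    have hderiv : ∀ᶠ z in 𝓝 (0 : ℂ), deriv G z = G₁ z + z * deriv G₁ z := by
      filter_upwards [hG₁.eventually_analyticAt] with z hz
      have hD : HasDerivAt (fun w => w * G₁ w) (1 * G₁ z + z * deriv G₁ z) z :=
        (hasDerivAt_id z).mul hz.differentiableAt.hasDerivAt
      have hGeq : G = fun w => w * G₁ w := funext hfac
      rw [hGeq, hD.deriv]
      ring
    have hev : ∀ᶠ z in 𝓝[≠] (0 : ℂ), z * deriv G₁ z = (n : ℂ) * G₁ z + z ^ n * g z := by
      filter_upwards [h.filter_mono nhdsWithin_le_nhds,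
        hderiv.filter_mono nhdsWithin_le_nhds, self_mem_nhdsWithin] with z h1 h2 hz
      have hz0 : z ≠ 0 := hz
      rw [h2, hfac z] at h1
      apply mul_left_cancel₀ hz0
      push_cast at h1 ⊢
      ring_nf at h1 ⊢
      linear_combination h1
    have hev' : ∀ᶠ z in 𝓝 (0 : ℂ), z * deriv G₁ z = (n : ℂ) * G₁ z + z ^ n * g z := by
      have hA : ContinuousAt (fun z => z * deriv G₁ z - ((n : ℂ) * G₁ z + z ^ n * g z)) 0 := by
        apply ContinuousAt.sub
        · exact continuousAt_id.mul (analyticAt_deriv hG₁).continuousAt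
        · exact (continuousAt_const.mul hG₁.continuousAt).add
            ((continuousAt_id.pow n).mul hg.continuousAt)
      have := ext_zero hA (by
        filter_upwards [hev] with z hz
        rw [hz]; ring)
      filter_upwards [this] with z hz
      exact sub_eq_zero.mp hz
    exact ih G₁ g hG₁ hg hev'

/-- If `F` is meromorphic at `0` and `F' = g z / z` on a punctured neighborhood of `0`,
with `g` analytic at `0`, then `g 0 = 0` (the residue of `F'` must vanish). -/
private lemma lemA {F g : ℂ → ℂ} (hF : MeromorphicAt F 0) (hg : AnalyticAt ℂ g 0)
    (hd : ∀ᶠ z in 𝓝[≠] (0 : ℂ), HasDerivAt F (g z / z) z) : g 0 = 0 := by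
  obtain ⟨n, hG⟩ := hF
  simp only [sub_zero, smul_eq_mul] at hG
  set G : ℂ → ℂ := fun z => z ^ n * F z with hGdef
  have hev : ∀ᶠ z in 𝓝[≠] (0 : ℂ), z * deriv G z = (n : ℂ) * G z + z ^ n * g z := by
    filter_upwards [hd, self_mem_nhdsWithin] with z hz hz0'
    have hz0 : z ≠ 0 := hz0'
    have hD : HasDerivAt G ((n : ℂ) * z ^ (n - 1) * F z + z ^ n * (g z / z)) z :=
      (hasDerivAt_pow n z).mul hz
    rw [hD.deriv]
    rcases Nat.eq_zero_or_pos n with rfl | hn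
    · simp only [Nat.cast_zero, pow_zero, zero_mul, one_mul, zero_add]
      field_simp
    · obtain ⟨m, rfl⟩ : ∃ m, n = m + 1 := ⟨n - 1, by omega⟩
      simp only [Nat.add_sub_cancel]
      have hgz : z ^ (m + 1) * (g z / z) = z ^ m * g z := by
        field_simp
        ring
      rw [hgz]
      push_cast
      ring
  have hev' : ∀ᶠ z in 𝓝 (0 : ℂ), z * deriv G z = (n : ℂ) * G z + z ^ n * g z := by
    have hA : ContinuousAt (fun z => z * deriv G z - ((n : ℂ) * G z + z ^ n * g z)) 0 := by
      apply ContinuousAt.sub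
      · exact continuousAt_id.mul (analyticAt_deriv hG).continuousAt
      · exact (continuousAt_const.mul hG.continuousAt).add
          ((continuousAt_id.pow n).mul hg.continuousAt)
    have := ext_zero hA (by
      filter_upwards [hev] with z hz
      rw [hz]; ring)
    filter_upwards [this] with z hz
    have h2 := sub_eq_zero.mp hz
    exact h2
  exact key n G g hG hg hev'

/-- For `ω ∈ ℂ`, the function `z ↦ e^{iωz}/sin² z` admits a meromorphic
antiderivative on `ℂ` if and only if `ω = 0`. -/
theorem stmt_3 (ω : ℂ) :
    (∃ F : ℂ → ℂ, (∀ z : ℂ, MeromorphicAt F z) ∧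
      ∀ z : ℂ, Complex.sin z ≠ 0 →
        HasDerivAt F (Complex.exp (Complex.I * ω * z) / Complex.sin z ^ 2) z) ↔
    ω = 0 := by
  constructor
  · rintro ⟨F, hFm, hFd⟩
    -- `S z = sin z / z` extended analytically, `S 0 = 1`.
    set S : ℂ → ℂ := dslope Complex.sin 0 with hSdef
    have hSan : AnalyticAt ℂ S 0 := dslope_analyticAt (Complex.differentiable_sin.analyticAt 0)
    have hS0 : S 0 = 1 := by
      rw [hSdef, dslope_same, Complex.deriv_sin, Complex.cos_zero]
    have hSfac : ∀ z : ℂ, z ≠ 0 → Complex.sin z = z * S z := by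
      intro z hz
      rw [hSdef, dslope_of_ne _ hz, slope_def_field, Complex.sin_zero, sub_zero, sub_zero]
      field_simp
    -- the numerator function
    have hnum : Differentiable ℂ (fun z : ℂ =>
        Complex.I * ω * Complex.exp (Complex.I * ω * z) * Complex.cos z) := by
      fun_prop
    set g : ℂ → ℂ := fun z =>
      Complex.I * ω * Complex.exp (Complex.I * ω * z) * Complex.cos z / S z with hgdef
    have hgan : AnalyticAt ℂ g 0 := by
      apply (hnum.analyticAt 0).div hSan
      rw [hS0]; exact one_ne_zero
    -- the corrected antiderivative
    set F₁ : ℂ → ℂ := fun z =>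
      F z + Complex.exp (Complex.I * ω * z) * Complex.cos z / Complex.sin z with hF₁def
    have hF₁m : MeromorphicAt F₁ 0 := by
      have h1 : MeromorphicAt (fun z : ℂ =>
          Complex.exp (Complex.I * ω * z) * Complex.cos z / Complex.sin z) 0 :=
        ((Complex.differentiable_exp.comp (by fun_prop)).mul
          Complex.differentiable_cos |>.analyticAt 0).meromorphicAt.div
          (Complex.differentiable_sin.analyticAt 0).meromorphicAt
      exact (hFm 0).add h1
    have hsin_ne : ∀ᶠ z in 𝓝[≠] (0 : ℂ), Complex.sin z ≠ 0 := by
      rcases (Complex.differentiable_sin.analyticAt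
        0).eventually_eq_zero_or_eventually_ne_zero with h | h
      · exfalso
        have hd : deriv Complex.sin 0 = deriv (fun _ : ℂ => (0 : ℂ)) 0 :=
          Filter.EventuallyEq.deriv_eq h
        rw [Complex.deriv_sin, Complex.cos_zero, deriv_const] at hd
        exact one_ne_zero hd
      · exact h
    have hd : ∀ᶠ z in 𝓝[≠] (0 : ℂ), HasDerivAt F₁ (g z / z) z := by
      filter_upwards [hsin_ne, self_mem_nhdsWithin] with z hsz hz0'
      have hz0 : z ≠ 0 := hz0'
      have h1 := hFd z hsz
      have he : HasDerivAt (fun w : ℂ => Complex.exp (Complex.I * ω * w))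
          (Complex.exp (Complex.I * ω * z) * (Complex.I * ω)) z := by
        have := ((hasDerivAt_id z).const_mul (Complex.I * ω)).cexp
        simpa using this
      have h2 : HasDerivAt (fun w : ℂ =>
          Complex.exp (Complex.I * ω * w) * Complex.cos w / Complex.sin w)
          (((Complex.exp (Complex.I * ω * z) * (Complex.I * ω) * Complex.cos z +
            Complex.exp (Complex.I * ω * z) * (-Complex.sin z)) * Complex.sin z -
            Complex.exp (Complex.I * ω * z) * Complex.cos z * Complex.cos z) /
            Complex.sin z ^ 2) z :=
        (he.mul (Complex.hasDerivAt_cos z)).div (Complex.hasDerivAt_sin z) hsz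
      have h3 := h1.add h2
      convert h3 using 1
      · rfl
      · rfl
      · rfl
      have hsin : Complex.sin z = z * S z := hSfac z hz0
      have hSz : S z ≠ 0 := by
        intro hS
        rw [hS, mul_zero] at hsin
        exact hsz hsin
      have hS2 : S z = Complex.sin z / z := by
        rw [hsin]; field_simp
      rw [hgdef]
      simp only [hS2]
      have hpyth := Complex.sin_sq_add_cos_sq z
      field_simp
      linear_combination hpyth
    have hg0 : g 0 = 0 := lemA hF₁m hgan hd
    rw [hgdef] at hg0
    simp only [mul_zero, Complex.exp_zero, Complex.cos_zero, hS0, mul_one, div_one] at hg0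
    rcases mul_eq_zero.mp hg0 with h | h
    · exact absurd h Complex.I_ne_zero
    · exact h
  · rintro rfl
    refine ⟨fun z => -(Complex.cos z / Complex.sin z), fun z => ?_, fun z hz => ?_⟩
    · exact ((Complex.differentiable_cos.analyticAt z).meromorphicAt.div
        (Complex.differentiable_sin.analyticAt z).meromorphicAt).neg
    · have h1 : HasDerivAt (fun w => Complex.cos w / Complex.sin w)
          ((-Complex.sin z * Complex.sin z - Complex.cos z * Complex.cos z) /
            Complex.sin z ^ 2) z :=
        (Complex.hasDerivAt_cos z).div (Complex.hasDerivAt_sin z) hz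
      convert h1.neg using 1
      · rfl
      · rfl
      · rfl
      have hpyth := Complex.sin_sq_add_cos_sq z
      simp only [mul_zero, zero_mul, Complex.exp_zero]
      field_simp
      linear_combination -hpyth
end

section
/- Let n ≥ 1 be an integer and ω ∈ ℂ. The function z ↦ e^{iωz}/sin^n(z) admits a meromorphic antiderivative on ℂ if and only if ω is an integer with ω ≡ n (mod 2) and |ω| ≤ n − 2. Explicitly: for even n ≥ 2 this happens exactly for ω ∈ {0, ±2, ±4, …, ±(n−2)}; for odd n ≥ 3 exactly for ω ∈ {±1, ±3, …, ±(n−2)}; and for n = 1 it never happens. -/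
open Complex Metric

noncomputable section StmtAux

/-- admits meromorphic antiderivative -/
def AdmAux (n : ℕ) (ω : ℂ) : Prop :=
  ∃ F : ℂ → ℂ, (∀ z : ℂ, MeromorphicAt F z) ∧
    ∀ z : ℂ, Complex.sin z ≠ 0 →
      HasDerivAt F (Complex.exp (Complex.I * ω * z) / Complex.sin z ^ n) z

lemma sin_ne_zero_small {z : ℂ} (h0 : z ≠ 0) (h : ‖z‖ < Real.pi) :
    Complex.sin z ≠ 0 := by
  rw [Ne, Complex.sin_eq_zero_iff]
  rintro ⟨k, rfl⟩
  rcases eq_or_ne k 0 with rfl | hk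
  · simp at h0
  · rw [norm_mul] at h
    have : (1:ℝ) ≤ ‖(k:ℂ)‖ := by
      rw [Complex.norm_intCast]
      exact_mod_cast Int.one_le_abs (by exact_mod_cast hk)
    have hπ : ‖(Real.pi : ℂ)‖ = Real.pi := by
      simp [Complex.norm_real, Real.pi_pos.le, abs_of_nonneg]
    nlinarith [Real.pi_pos]

lemma tendsto_sin_div : Filter.Tendsto (fun z : ℂ => Complex.sin z / z)
    (nhdsWithin 0 {(0:ℂ)}ᶜ) (nhds 1) := by
  have h : HasDerivAt Complex.sin 1 0 := by simpa using Complex.hasDerivAt_sin 0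
  have := hasDerivAt_iff_tendsto_slope.mp h
  refine this.congr fun z => ?_
  simp only [slope_fun_def, Complex.sin_zero, sub_zero, div_eq_mul_inv, vsub_eq_sub, smul_eq_mul]
  ring

lemma cauchy_u (u : ℂ → ℂ) (hu : Differentiable ℂ u) {r : ℝ} (hr : 0 < r) (hr' : r < Real.pi) :
    (∮ z in C((0:ℂ), r), u z / Complex.sin z) = 2 * Real.pi * I * u 0 := by
  set f : ℂ → ℂ := fun z => if z = 0 then u 0 else u z * (z / Complex.sin z) with hf
  have hsin : ∀ z ∈ closedBall (0:ℂ) r, z ≠ 0 → Complex.sin z ≠ 0 := by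
    intro z hz h0
    exact sin_ne_zero_small h0 (lt_of_le_of_lt (by simpa using hz) hr')
  have hcont : ContinuousOn f (closedBall 0 r) := by
    intro z hz
    rcases eq_or_ne z 0 with rfl | h0
    · apply ContinuousAt.continuousWithinAt
      have h1 : Filter.Tendsto (fun z : ℂ => u z * (z / Complex.sin z))
          (nhdsWithin 0 {(0:ℂ)}ᶜ) (nhds (u 0)) := by
        have h2 : Filter.Tendsto (fun z : ℂ => z / Complex.sin z)
            (nhdsWithin 0 {(0:ℂ)}ᶜ) (nhds 1) := by
          have h2' := tendsto_sin_div.inv₀ one_ne_zero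
          rw [inv_one] at h2'
          refine h2'.congr fun z => ?_
          rw [inv_div]
        have h3 := ((hu.continuous.tendsto 0).mono_left nhdsWithin_le_nhds).mul h2
        simpa using h3
      have h4 : Filter.Tendsto f (nhdsWithin 0 {(0:ℂ)}ᶜ) (nhds (u 0)) := by
        refine h1.congr' ?_
        filter_upwards [self_mem_nhdsWithin] with z hz
        have hz' : z ≠ 0 := hz
        simp [hf, hz']
      have h5 : f 0 = u 0 := by simp [hf]
      have h6 : Filter.Tendsto f (nhds 0) (nhds (u 0)) := by
        rw [← nhdsNE_sup_pure (0:ℂ), Filter.tendsto_sup]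
        refine ⟨h4, ?_⟩
        have := tendsto_pure_nhds f (0:ℂ)
        rwa [h5] at this
      simpa [ContinuousAt, h5] using h6
    · apply ContinuousAt.continuousWithinAt
      have hev : ∀ᶠ w in nhds z, f w = u w * (w / Complex.sin w) := by
        filter_upwards [isOpen_compl_singleton.mem_nhds h0] with w hw
        have hw' : w ≠ 0 := hw
        simp [hf, hw']
      rw [continuousAt_congr hev]
      exact (hu.continuous.continuousAt).mul
        ((continuousAt_id.div (Complex.continuous_sin.continuousAt) (hsin z hz h0)))
  have hdiff : ∀ x ∈ ball (0:ℂ) r \ {0}, DifferentiableAt ℂ f x := by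
    rintro x ⟨hx, hx0⟩
    have hx0 : x ≠ 0 := hx0
    have hev : (fun w => u w * (w / Complex.sin w)) =ᶠ[nhds x] f := by
      filter_upwards [isOpen_compl_singleton.mem_nhds hx0] with w hw
      have hw' : w ≠ 0 := hw
      simp [hf, hw']
    refine DifferentiableAt.congr_of_eventuallyEq ?_ hev.symm
    exact (hu x).mul (differentiableAt_id.div (Complex.differentiable_sin x)
      (hsin x (ball_subset_closedBall hx) hx0))
  have key := circleIntegral_sub_inv_smul_of_differentiable_on_off_countable
    (Set.countable_singleton (0:ℂ)) (mem_ball_self hr) hcont hdiff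
  have heq : ∀ z ∈ sphere (0:ℂ) r, u z / Complex.sin z = (z - 0)⁻¹ • f z := by
    intro z hz
    have h0 : z ≠ 0 := by
      intro h; rw [h] at hz; simp at hz; linarith
    have hs : Complex.sin z ≠ 0 := hsin z (sphere_subset_closedBall hz) h0
    simp only [hf, if_neg h0, sub_zero, smul_eq_mul]
    field_simp
  rw [circleIntegral.integral_congr hr.le heq, key]
  have h5 : f 0 = u 0 := by simp [hf]
  rw [h5, smul_eq_mul]

lemma hasDerivAt_e (ω z : ℂ) :
    HasDerivAt (fun w => Complex.exp (I*ω*w)) (I * ω * Complex.exp (I*ω*z)) z := by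
  have := ((hasDerivAt_id z).const_mul (I*ω)).cexp
  simpa [mul_comm] using this

lemma diff_e (ω : ℂ) : Differentiable ℂ (fun w => Complex.exp (I*ω*w)) :=
  fun z => (hasDerivAt_e ω z).differentiableAt

lemma alg (j : ℕ) (E S C K ω : ℂ) (hS : S ≠ 0) (hj : (j:ℂ)+1 ≠ 0)
    (hK : K^2 = -ω^2) (hcs : S^2 + C^2 = 1) :
    ((j:ℂ)+1 - ω^2/((j:ℂ)+1)) * (E / S^(j+1)) - ((j:ℂ)+2) * (E / S^(j+3))
     = ((K*E*C + E*(-S)) * S^(j+2) - E*C*(((j:ℂ)+2) * S^(j+1) * C)) / (S^(j+2))^2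
       + K/((j:ℂ)+1) * ((K*E*S^(j+1) - E*(((j:ℂ)+1) * S^j * C))/(S^(j+1))^2) := by
  have e1 : S ^ (j+2) = S^j * S^2 := by ring
  have e2 : S ^ (j+1) = S^j * S := by ring
  have e3 : S ^ (j+3) = S^j * S^2 * S := by ring
  have hSj : S ^ j ≠ 0 := pow_ne_zero _ hS
  rw [e1, e2, e3, div_mul_div_comm]
  field_simp [hj, hSj, hS]
  linear_combination (E * (((j:ℂ)+1)*((j:ℂ)+2))) * hcs - (E * S^2) * hK

/-- the auxiliary function in the reduction -/
def Gfun (j : ℕ) (ω : ℂ) : ℂ → ℂ := fun w =>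
  Complex.exp (I*ω*w) * Complex.cos w / Complex.sin w ^ (j+2)
    + (I*ω/((j:ℂ)+1)) * (Complex.exp (I*ω*w) / Complex.sin w ^ (j+1))

lemma cast_succ_ne (j : ℕ) : ((j:ℂ)+1) ≠ 0 := by
  have := Nat.cast_add_one_ne_zero (R := ℂ) j
  push_cast at this
  exact this

lemma cast_succ2_ne (j : ℕ) : ((j:ℂ)+2) ≠ 0 := by
  have := Nat.cast_add_one_ne_zero (R := ℂ) (j+1)
  push_cast at this
  intro h; apply this; rw [← h]; ring

lemma mer_Gfun (j : ℕ) (ω : ℂ) (z : ℂ) : MeromorphicAt (Gfun j ω) z := by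
  have h1 : MeromorphicAt (fun w => Complex.exp (I*ω*w) * Complex.cos w / Complex.sin w ^ (j+2)) z :=
    MeromorphicAt.div
      (MeromorphicAt.mul ((diff_e ω).analyticAt z).meromorphicAt
        ((Complex.differentiable_cos.analyticAt z).meromorphicAt))
      (MeromorphicAt.pow ((Complex.differentiable_sin.analyticAt z).meromorphicAt) (j+2))
  have h2 : MeromorphicAt (fun w => (I*ω/((j:ℂ)+1)) * (Complex.exp (I*ω*w) / Complex.sin w ^ (j+1))) z :=
    MeromorphicAt.mul (MeromorphicAt.const _ z)
      (MeromorphicAt.div ((diff_e ω).analyticAt z).meromorphicAt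
        (MeromorphicAt.pow ((Complex.differentiable_sin.analyticAt z).meromorphicAt) (j+1)))
  exact h1.add h2

lemma hasDerivAt_G (j : ℕ) (ω z : ℂ) (hz : Complex.sin z ≠ 0) :
    HasDerivAt (Gfun j ω)
      ( ((j:ℂ)+1 - ω^2/((j:ℂ)+1)) * (Complex.exp (I*ω*z) / Complex.sin z ^ (j+1))
        - ((j:ℂ)+2) * (Complex.exp (I*ω*z) / Complex.sin z ^ (j+3)) ) z := by
  have hN : ((j:ℂ)+1) ≠ 0 := cast_succ_ne j
  have he := hasDerivAt_e ω z
  have hs := Complex.hasDerivAt_sin z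
  have hc := Complex.hasDerivAt_cos z
  have hp2 : HasDerivAt (fun w => Complex.sin w ^ (j+2))
      ((j+2 : ℕ) * Complex.sin z ^ (j+1) * Complex.cos z) z := by
    simpa using hs.fun_pow (j+2)
  have hp1 : HasDerivAt (fun w => Complex.sin w ^ (j+1))
      ((j+1 : ℕ) * Complex.sin z ^ j * Complex.cos z) z := by
    simpa using hs.fun_pow (j+1)
  have hT1 := (he.mul hc).div hp2 (pow_ne_zero _ hz)
  have hT2 := (he.div hp1 (pow_ne_zero _ hz)).const_mul (I*ω/((j:ℂ)+1))
  have hD := hT1.add hT2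
  refine hD.congr_deriv ?_
  symm
  push_cast
  exact alg j (Complex.exp (I*ω*z)) (Complex.sin z) (Complex.cos z) (I*ω) ω hz hN
    (by rw [mul_pow, I_sq]; ring) (Complex.sin_sq_add_cos_sq z)

/-- the statement functions, note `I * ω` order matches the target statement -/
lemma exp_eq (ω z : ℂ) : Complex.exp (Complex.I * ω * z) = Complex.exp (I*ω*z) := rfl

lemma step_up (k : ℕ) (hk : 1 ≤ k) (ω : ℂ) (h : AdmAux k ω) : AdmAux (k+2) ω := by
  obtain ⟨j, rfl⟩ : ∃ j, k = j + 1 := ⟨k - 1, by omega⟩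
  obtain ⟨F, hFm, hFd⟩ := h
  set c : ℂ := (((j:ℂ)+1)^2 - ω^2)/((((j:ℂ)+1))*(((j:ℂ)+2))) with hc
  refine ⟨fun z => c * F z - Gfun j ω z / ((j:ℂ)+2), fun z => ?_, fun z hz => ?_⟩
  · exact (((MeromorphicAt.const c z).mul (hFm z))).sub ((mer_Gfun j ω z).div (MeromorphicAt.const _ z))
  · have h1 := ((hFd z hz).const_mul c).sub ((hasDerivAt_G j ω z hz).div_const ((j:ℂ)+2))
    refine h1.congr_deriv ?_
    symm
    rw [exp_eq]
    have h2 : ((j:ℂ)+1) ≠ 0 := cast_succ_ne j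
    have h3 : ((j:ℂ)+2) ≠ 0 := cast_succ2_ne j
    have hS1 : Complex.sin z ^ (j+1) ≠ 0 := pow_ne_zero _ hz
    have hS3 : Complex.sin z ^ (j+3) ≠ 0 := pow_ne_zero _ hz
    rw [hc]
    rw [show j+1+2 = j+3 from by omega]
    generalize Complex.exp (I*ω*z) / Complex.sin z ^ (j+1) = a
    generalize Complex.exp (I*ω*z) / Complex.sin z ^ (j+3) = b
    field_simp
    ring

lemma step_down (k : ℕ) (hk : 1 ≤ k) (ω : ℂ) (hne : ((k:ℕ):ℂ)^2 ≠ ω^2)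
    (h : AdmAux (k+2) ω) : AdmAux k ω := by
  obtain ⟨j, rfl⟩ : ∃ j, k = j + 1 := ⟨k - 1, by omega⟩
  obtain ⟨F, hFm, hFd⟩ := h
  have h2 : ((j:ℂ)+1) ≠ 0 := cast_succ_ne j
  have h3 : ((j:ℂ)+2) ≠ 0 := cast_succ2_ne j
  have hne' : ((j:ℂ)+1)^2 - ω^2 ≠ 0 := by
    intro hh
    apply hne
    push_cast
    linear_combination hh
  set c : ℂ := (((j:ℂ)+1)^2 - ω^2)/((((j:ℂ)+1))*(((j:ℂ)+2))) with hc
  have hcne : c ≠ 0 := div_ne_zero hne' (mul_ne_zero h2 h3)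
  refine ⟨fun z => (F z + Gfun j ω z / ((j:ℂ)+2)) / c, fun z => ?_, fun z hz => ?_⟩
  · exact ((hFm z).add ((mer_Gfun j ω z).div (MeromorphicAt.const _ z))).div
      (MeromorphicAt.const _ z)
  · have h1 := ((hFd z hz).add ((hasDerivAt_G j ω z hz).div_const ((j:ℂ)+2))).div_const c
    refine h1.congr_deriv ?_
    symm
    rw [exp_eq, hc]
    rw [show j+1+2 = j+3 from by omega]
    generalize Complex.exp (I*ω*z) / Complex.sin z ^ (j+1) = a
    generalize Complex.exp (I*ω*z) / Complex.sin z ^ (j+3) = b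
    field_simp
    ring

lemma base_pure (k : ℕ) (hk : 1 ≤ k) (ω : ℂ) (hω : ω^2 = ((k:ℕ):ℂ)^2) :
    AdmAux (k+2) ω := by
  obtain ⟨j, rfl⟩ : ∃ j, k = j + 1 := ⟨k - 1, by omega⟩
  have h2 : ((j:ℂ)+1) ≠ 0 := cast_succ_ne j
  have h3 : ((j:ℂ)+2) ≠ 0 := cast_succ2_ne j
  have hω' : ω^2 = ((j:ℂ)+1)^2 := by rw [hω]; push_cast; ring
  refine ⟨fun z => -(Gfun j ω z / ((j:ℂ)+2)), fun z => ?_, fun z hz => ?_⟩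
  · exact ((mer_Gfun j ω z).div (MeromorphicAt.const _ z)).neg
  · have h1 := ((hasDerivAt_G j ω z hz).div_const ((j:ℂ)+2)).neg
    refine h1.congr_deriv ?_
    symm
    rw [exp_eq, hω']
    rw [show j+1+2 = j+3 from by omega]
    generalize Complex.exp (I*ω*z) / Complex.sin z ^ (j+1) = a
    generalize Complex.exp (I*ω*z) / Complex.sin z ^ (j+3) = b
    field_simp
    ring

lemma adm2zero : AdmAux 2 0 := by
  refine ⟨fun z => -(Complex.cos z / Complex.sin z), fun z => ?_, fun z hz => ?_⟩
  · exact (((Complex.differentiable_cos.analyticAt z).meromorphicAt).div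
      ((Complex.differentiable_sin.analyticAt z).meromorphicAt)).neg
  · have h1 := ((Complex.hasDerivAt_cos z).div (Complex.hasDerivAt_sin z) hz).neg
    refine h1.congr_deriv ?_
    symm
    have hcs := Complex.sin_sq_add_cos_sq z
    rw [show Complex.I * 0 * z = 0 by ring, Complex.exp_zero]
    field_simp
    linear_combination (-1 : ℂ) * hcs

lemma circ_zero (h : ℂ → ℂ) (F : ℂ → ℂ) {r : ℝ} (hr : 0 ≤ r)
    (hd : ∀ z ∈ sphere (0:ℂ) r, HasDerivAt F (h z) z) :
    (∮ z in C((0:ℂ), r), h z) = 0 :=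
  circleIntegral.integral_eq_zero_of_hasDerivWithinAt hr
    (fun z hz => (hd z hz).hasDerivWithinAt)

lemma sphere_prop {z : ℂ} (hz : z ∈ sphere (0:ℂ) (Real.pi/2)) :
    Complex.sin z ≠ 0 := by
  have h1 : ‖z‖ = Real.pi/2 := by
    simpa using mem_sphere_zero_iff_norm.mp hz
  have h0 : z ≠ 0 := by
    intro h; rw [h] at h1; simp at h1; nlinarith [Real.pi_pos]
  exact sin_ne_zero_small h0 (by rw [h1]; linarith [Real.pi_pos])

lemma two_pi_I_ne : (2 * (Real.pi:ℂ) * I) ≠ 0 :=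
  mul_ne_zero (mul_ne_zero two_ne_zero (Complex.ofReal_ne_zero.mpr Real.pi_ne_zero)) I_ne_zero

lemma no_Adm1 (ω : ℂ) : ¬ AdmAux 1 ω := by
  rintro ⟨F, hM, hF⟩
  have hr : (0:ℝ) < Real.pi/2 := by linarith [Real.pi_pos]
  have hr' : Real.pi/2 < Real.pi := by linarith [Real.pi_pos]
  have key : (∮ z in C((0:ℂ), Real.pi/2), Complex.exp (I*ω*z) / Complex.sin z) = 0 := by
    apply circ_zero _ F hr.le
    intro z hz
    have := hF z (sphere_prop hz)
    simpa [pow_one] using this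
  have h2 : (∮ z in C((0:ℂ), Real.pi/2), Complex.exp (I*ω*z) / Complex.sin z)
      = 2 * (Real.pi:ℂ) * I * Complex.exp (I*ω*0) :=
    cauchy_u (fun z => Complex.exp (I*ω*z)) (diff_e ω) hr hr'
  rw [key] at h2
  simp only [mul_zero, Complex.exp_zero, mul_one] at h2
  exact two_pi_I_ne h2.symm

lemma no_Adm2 (ω : ℂ) (hω : ω ≠ 0) : ¬ AdmAux 2 ω := by
  rintro ⟨F, hM, hF⟩
  have hr : (0:ℝ) < Real.pi/2 := by linarith [Real.pi_pos]
  have hr' : Real.pi/2 < Real.pi := by linarith [Real.pi_pos]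
  have hIω : I * ω ≠ 0 := mul_ne_zero I_ne_zero hω
  have key : (∮ z in C((0:ℂ), Real.pi/2), Complex.exp (I*ω*z) * Complex.cos z / Complex.sin z) = 0 := by
    apply circ_zero _ (fun z => (F z + Complex.exp (I*ω*z) * (Complex.cos z / Complex.sin z)) / (I*ω)) hr.le
    intro z hz
    have hsz := sphere_prop hz
    have h1 := ((hF z hsz).add ((hasDerivAt_e ω z).mul
      ((Complex.hasDerivAt_cos z).div (Complex.hasDerivAt_sin z) hsz))).div_const (I*ω)
    refine h1.congr_deriv ?_
    symm
    rw [exp_eq, eq_div_iff hIω]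
    have hcs := Complex.sin_sq_add_cos_sq z
    simp only [Pi.div_apply]
    field_simp
    linear_combination hcs
  have h2 : (∮ z in C((0:ℂ), Real.pi/2), Complex.exp (I*ω*z) * Complex.cos z / Complex.sin z)
      = 2 * (Real.pi:ℂ) * I * (Complex.exp (I*ω*0) * Complex.cos 0) :=
    cauchy_u (fun z => Complex.exp (I*ω*z) * Complex.cos z)
      ((diff_e ω).mul Complex.differentiable_cos) hr hr'
  rw [key] at h2
  simp only [mul_zero, Complex.exp_zero, Complex.cos_zero, mul_one] at h2
  exact two_pi_I_ne h2.symm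

lemma up (t : ℕ) : ∀ (k : ℕ), 1 ≤ k → ∀ ω : ℂ, AdmAux k ω → AdmAux (k + 2*t) ω := by
  induction t with
  | zero => intro k hk ω h; simpa using h
  | succ t ih =>
    intro k hk ω h
    have h1 := step_up k hk ω h
    have h2 := ih (k+2) (by omega) ω h1
    have : k + 2 + 2*t = k + 2*(t+1) := by omega
    rwa [this] at h2

lemma down (t : ℕ) : ∀ (k : ℕ), 1 ≤ k → ∀ ω : ℂ,
    (∀ i, i < t → (((k + 2*i :ℕ)):ℂ)^2 ≠ ω^2) → AdmAux (k + 2*t) ω → AdmAux k ω := by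
  induction t with
  | zero => intro k hk ω _ h; simpa using h
  | succ t ih =>
    intro k hk ω hne h
    have e1 : k + 2*(t+1) = (k + 2*t) + 2 := by omega
    rw [e1] at h
    have h1 := step_down (k + 2*t) (by omega) ω (by
      have := hne t (by omega)
      convert this using 3) h
    exact ih k hk ω (fun i hi => hne i (by omega)) h1

lemma forward (n : ℕ) (hn : 1 ≤ n) (ω : ℂ) (hA : AdmAux n ω)
    (hcon : ∀ m : ℤ, ω = (m:ℂ) → m % 2 = (n:ℤ) % 2 → (n:ℤ) - 2 < |m|) : False := by
  set k₀ : ℕ := if n % 2 = 0 then 2 else 1 with hk₀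
  have hk1 : 1 ≤ k₀ := by rw [hk₀]; split <;> omega
  have hkpar : k₀ % 2 = n % 2 := by
    rw [hk₀]; split
    · omega
    · omega
  have hkle : k₀ ≤ n := by
    rw [hk₀]; split
    · omega
    · omega
  obtain ⟨t, ht⟩ : ∃ t, n = k₀ + 2*t := ⟨(n - k₀)/2, by omega⟩
  rw [ht] at hA
  have hside : ∀ i, i < t → (((k₀ + 2*i :ℕ)):ℂ)^2 ≠ ω^2 := by
    intro i hi heq
    set K : ℕ := k₀ + 2*i with hK
    have hfac : (ω - (K:ℂ)) * (ω + (K:ℂ)) = 0 := by linear_combination -heq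
    have hKpar : (K:ℤ) % 2 = (n:ℤ) % 2 := by omega
    have hKle : (K:ℤ) ≤ (n:ℤ) - 2 := by omega
    have hKnn : (0:ℤ) ≤ (K:ℤ) := by positivity
    rcases mul_eq_zero.mp hfac with h | h
    · have := hcon (K:ℤ) (by push_cast; linear_combination h) (by omega)
      rw [abs_of_nonneg hKnn] at this
      omega
    · have := hcon (-(K:ℤ)) (by push_cast; linear_combination h) (by omega)
      rw [abs_neg, abs_of_nonneg hKnn] at this
      omega
  have hbase := down t k₀ hk1 ω hside hA
  by_cases hc : n % 2 = 0
  · have hk2 : k₀ = 2 := by rw [hk₀, if_pos hc]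
    rw [hk2] at hbase
    have hω : ω ≠ 0 := by
      intro h0
      have := hcon 0 (by simp [h0]) (by omega)
      simp at this
      omega
    exact no_Adm2 ω hω hbase
  · have hk2 : k₀ = 1 := by rw [hk₀, if_neg hc]
    rw [hk2] at hbase
    exact no_Adm1 ω hbase

lemma backward (n : ℕ) (hn : 1 ≤ n) (m : ℤ) (hpar : m % 2 = (n:ℤ) % 2)
    (habs : |m| ≤ (n:ℤ) - 2) : AdmAux n (m:ℂ) := by
  rcases eq_or_ne m 0 with rfl | hm
  · have h2 : 2 ≤ n := by simp at habs; omega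
    have hpar' : (n:ℤ) % 2 = 0 := by omega
    obtain ⟨t, ht⟩ : ∃ t, n = 2 + 2*t := ⟨(n-2)/2, by omega⟩
    have h := up t 2 (by omega) 0 adm2zero
    rw [ht, Int.cast_zero]
    exact h
  · set K : ℕ := m.natAbs with hK
    have hK1 : 1 ≤ K := Int.natAbs_pos.mpr hm
    have habs' : |m| = (K:ℤ) := by rw [hK, Int.abs_eq_natAbs]
    have habs2 : (K:ℤ) ≤ (n:ℤ) - 2 := habs' ▸ habs
    have hsq : ((K:ℤ))^2 = m^2 := by rw [hK]; exact Int.natAbs_sq m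
    have hparK : (K:ℤ) % 2 = (n:ℤ) % 2 := by
      rcases Int.natAbs_eq m with hs | hs
      · rw [hK] at *; omega
      · rw [hK] at *; omega
    obtain ⟨t, ht⟩ : ∃ t, n = (K+2) + 2*t := ⟨(n-(K+2))/2, by omega⟩
    have hb := base_pure K hK1 (m:ℂ) (by
      have h3 := congrArg (fun x : ℤ => (x:ℂ)) hsq
      push_cast at h3
      exact_mod_cast h3.symm)
    have h := up t (K+2) (by omega) (m:ℂ) hb
    rw [ht]
    exact h

end StmtAux

/-- Lemma A.4: for `n ≥ 1` and `ω ∈ ℂ`, the function `z ↦ e^{iωz}/sinⁿ z` admits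
a meromorphic antiderivative on `ℂ` iff `ω` is an integer of the same parity as
`n` with `|ω| ≤ n − 2`. -/
theorem stmt_6 (n : ℕ) (hn : 1 ≤ n) (ω : ℂ) :
    (∃ F : ℂ → ℂ, (∀ z : ℂ, MeromorphicAt F z) ∧
      ∀ z : ℂ, Complex.sin z ≠ 0 →
        HasDerivAt F (Complex.exp (Complex.I * ω * z) / Complex.sin z ^ n) z) ↔
    ∃ m : ℤ, ω = (m : ℂ) ∧ m % 2 = (n : ℤ) % 2 ∧ |m| ≤ (n : ℤ) - 2 := by
  constructor
  · intro hF
    by_contra hcon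
    push_neg at hcon
    exact forward n hn ω hF hcon
  · rintro ⟨m, rfl, hpar, habs⟩
    exact backward n hn m hpar habs
end

section
/- Let e > 0 be real, ω ∈ ℂ, and set λ = 1 − 4ω². For t > 1/e put φ(t) = √(e·t² − 1/e) and E_ω(t) = ((e·t − 1)/(e·t + 1))^{ω} := exp(ω·log((e·t − 1)/(e·t + 1))). Then the function x(t) := φ(t)·E_ω(t) satisfies x''(t) = −λ/(e·t² − 1/e)²·x(t) = −λ·φ(t)^{−4}·x(t) for all t > 1/e; moreover, for ω = 0 the function x(t) := φ(t)·log((e·t − 1)/(e·t + 1)) satisfies x''(t) = −φ(t)^{−4}·x(t) for all t > 1/e. -/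
lemma aux_pos {e t : ℝ} (he : 0 < e) (ht : 1 / e < t) :
    0 < e * t - 1 ∧ 0 < e * t + 1 ∧ 0 < e * t ^ 2 - 1 / e := by
  have h1 : 1 < e * t := by
    rw [div_lt_iff₀ he] at ht; nlinarith
  have h2 : 0 < e * t + 1 := by linarith
  refine ⟨by linarith, h2, ?_⟩
  have : e * t ^ 2 - 1 / e = (e * t - 1) * (e * t + 1) / e := by field_simp; ring
  rw [this]; exact div_pos (mul_pos (by linarith) h2) he

-- clean sqrt derivative
lemma dsqrt {e t : ℝ} (he : 0 < e) (ht : 1 / e < t) :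
    HasDerivAt (fun s : ℝ => Real.sqrt (e * s ^ 2 - 1 / e))
      (e * t / Real.sqrt (e * t ^ 2 - 1 / e)) t := by
  obtain ⟨h1, h2, hP⟩ := aux_pos he ht
  have hPd : HasDerivAt (fun s : ℝ => e * s ^ 2 - 1 / e) (2 * e * t) t := by
    have := ((hasDerivAt_pow 2 t).const_mul e).sub_const (1 / e)
    refine this.congr_deriv ?_; push_cast; ring
  have := hPd.sqrt hP.ne'
  refine this.congr_deriv ?_
  have hs : Real.sqrt (e * t ^ 2 - 1 / e) ≠ 0 := by positivity
  field_simp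

lemma dlog {e t : ℝ} (he : 0 < e) (ht : 1 / e < t) :
    HasDerivAt (fun s : ℝ => Real.log ((e * s - 1) / (e * s + 1)))
      (2 / (e * t ^ 2 - 1 / e)) t := by
  obtain ⟨h1, h2, hP⟩ := aux_pos he ht
  have hn : HasDerivAt (fun s : ℝ => e * s - 1) e t := by
    simpa using ((hasDerivAt_id t).const_mul e).sub_const 1
  have hd : HasDerivAt (fun s : ℝ => e * s + 1) e t := by
    simpa using ((hasDerivAt_id t).const_mul e).add_const 1
  have hq := hn.div hd h2.ne'
  have := hq.log (by positivity : (e * t - 1) / (e * t + 1) ≠ 0)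
  have h3 : (-1 : ℝ) + e ^ 2 * t ^ 2 ≠ 0 := by nlinarith
  refine this.congr_deriv ?_
  simp only [Pi.div_apply]
  field_simp
  linear_combination (-2) * mul_inv_cancel₀ h3

lemma d1 {e t : ℝ} (he : 0 < e) (ht : 1 / e < t) (ω : ℂ) :
    HasDerivAt (fun s : ℝ =>
        (Real.sqrt (e * s ^ 2 - 1 / e) : ℂ) *
          Complex.exp (ω * (Real.log ((e * s - 1) / (e * s + 1)) : ℂ)))
      ((((e * t : ℝ) : ℂ) + 2 * ω) / (Real.sqrt (e * t ^ 2 - 1 / e) : ℂ) *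
        Complex.exp (ω * (Real.log ((e * t - 1) / (e * t + 1)) : ℂ))) t := by
  obtain ⟨h1, h2, hP⟩ := aux_pos he ht
  have hφ := (dsqrt he ht).ofReal_comp
  have hexp := (((dlog he ht).ofReal_comp).const_mul ω).cexp
  have hmul := hφ.mul hexp
  refine hmul.congr_deriv ?_
  have hSpos : 0 < Real.sqrt (e * t ^ 2 - 1 / e) := Real.sqrt_pos.mpr hP
  have hS : ((Real.sqrt (e * t ^ 2 - 1 / e) : ℝ) : ℂ) ≠ 0 := by
    exact_mod_cast hSpos.ne'
  have hS2 : ((Real.sqrt (e * t ^ 2 - 1 / e) : ℝ) : ℂ) ^ 2 = ((e * t ^ 2 - 1 / e : ℝ) : ℂ) := by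
    rw [← Complex.ofReal_pow, Real.sq_sqrt hP.le]
  have hPc : ((e * t ^ 2 - 1 / e : ℝ) : ℂ) ≠ 0 := by exact_mod_cast hP.ne'
  set S := Real.sqrt (e * t ^ 2 - 1 / e) with hSdef
  set E := Complex.exp (ω * (Real.log ((e * t - 1) / (e * t + 1)) : ℂ)) with hEdef
  have hS2' : ((S : ℝ) : ℂ) ^ 2 * e = (e : ℂ) ^ 2 * t ^ 2 - 1 := by
    have : S ^ 2 * e = e ^ 2 * t ^ 2 - 1 := by
      rw [hSdef, Real.sq_sqrt hP.le]; field_simp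
    exact_mod_cast this
  have hec : ((e : ℂ) * t ^ 2 * e - 1) ≠ 0 := by
    have : e * t ^ 2 * e - 1 ≠ 0 := by nlinarith
    exact_mod_cast this
  rw [Complex.ofReal_div, Complex.ofReal_div]
  push_cast
  field_simp
  have h3c : (-1 + (e:ℂ)^2*(t:ℂ)^2) ≠ 0 := by
    rw [show (-1 + (e:ℂ)^2*(t:ℂ)^2) = (S:ℂ)^2*e by linear_combination -hS2']
    exact mul_ne_zero (pow_ne_zero _ hS) (by exact_mod_cast he.ne')
  linear_combination (2*ω*E*(-1 + (e:ℂ)^2*(t:ℂ)^2)⁻¹) * hS2' + 2*ω*E * mul_inv_cancel₀ h3c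

lemma d2 {e t : ℝ} (he : 0 < e) (ht : 1 / e < t) (ω : ℂ) :
    HasDerivAt (fun s : ℝ =>
        (((e * s : ℝ) : ℂ) + 2 * ω) / (Real.sqrt (e * s ^ 2 - 1 / e) : ℂ) *
          Complex.exp (ω * (Real.log ((e * s - 1) / (e * s + 1)) : ℂ)))
      (-(1 - 4 * ω ^ 2) / ((e * t ^ 2 - 1 / e : ℝ) : ℂ) ^ 2 *
        ((Real.sqrt (e * t ^ 2 - 1 / e) : ℂ) *
          Complex.exp (ω * (Real.log ((e * t - 1) / (e * t + 1)) : ℂ)))) t := by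
  obtain ⟨h1, h2, hP⟩ := aux_pos he ht
  have hSpos : 0 < Real.sqrt (e * t ^ 2 - 1 / e) := Real.sqrt_pos.mpr hP
  have hS : ((Real.sqrt (e * t ^ 2 - 1 / e) : ℝ) : ℂ) ≠ 0 := by
    exact_mod_cast hSpos.ne'
  have hnum : HasDerivAt (fun s : ℝ => ((e * s : ℝ) : ℂ) + 2 * ω) ((e : ℝ) : ℂ) t := by
    have : HasDerivAt (fun s : ℝ => e * s) (e * 1) t := (hasDerivAt_id t).const_mul e
    simpa using (this.ofReal_comp).add_const (2 * ω)
  have hden := (dsqrt he ht).ofReal_comp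
  have hdiv := hnum.div hden hS
  have hexp := (((dlog he ht).ofReal_comp).const_mul ω).cexp
  have hfinal := hdiv.mul hexp
  refine hfinal.congr_deriv ?_
  simp only [Pi.div_apply]
  set S := Real.sqrt (e * t ^ 2 - 1 / e) with hSdef
  set E := Complex.exp (ω * (Real.log ((e * t - 1) / (e * t + 1)) : ℂ)) with hEdef
  have hS2' : ((S : ℝ) : ℂ) ^ 2 * e = (e : ℂ) ^ 2 * t ^ 2 - 1 := by
    have : S ^ 2 * e = e ^ 2 * t ^ 2 - 1 := by
      rw [hSdef, Real.sq_sqrt hP.le]; field_simp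
    exact_mod_cast this
  have heC : ((e : ℝ) : ℂ) ≠ 0 := by exact_mod_cast he.ne'
  have hPc2 : ((e : ℂ) * t ^ 2 - 1 / e) ≠ 0 := by
    have : e * t ^ 2 - 1 / e ≠ 0 := hP.ne'
    exact_mod_cast this
  have hPS : ((S : ℝ) : ℂ) ^ 2 = ((e * t ^ 2 - 1 / e : ℝ) : ℂ) := by
    rw [hSdef, ← Complex.ofReal_pow, Real.sq_sqrt hP.le]
  rw [Complex.ofReal_div, Complex.ofReal_div, ← hPS]
  push_cast
  field_simp
  linear_combination E * hS2'


lemma d1r {e t : ℝ} (he : 0 < e) (ht : 1 / e < t) :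
    HasDerivAt (fun s : ℝ =>
        Real.sqrt (e * s ^ 2 - 1 / e) * Real.log ((e * s - 1) / (e * s + 1)))
      ((e * t * Real.log ((e * t - 1) / (e * t + 1)) + 2) /
        Real.sqrt (e * t ^ 2 - 1 / e)) t := by
  obtain ⟨h1, h2, hP⟩ := aux_pos he ht
  have hmul := (dsqrt he ht).mul (dlog he ht)
  refine hmul.congr_deriv ?_
  set S := Real.sqrt (e * t ^ 2 - 1 / e) with hSdef
  have hSpos : 0 < S := Real.sqrt_pos.mpr hP
  have hPS : S ^ 2 = e * t ^ 2 - 1 / e := Real.sq_sqrt hP.le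
  rw [← hPS]
  field_simp

lemma d2r {e t : ℝ} (he : 0 < e) (ht : 1 / e < t) :
    HasDerivAt (fun s : ℝ =>
        (e * s * Real.log ((e * s - 1) / (e * s + 1)) + 2) /
          Real.sqrt (e * s ^ 2 - 1 / e))
      (-1 / (e * t ^ 2 - 1 / e) ^ 2 *
        (Real.sqrt (e * t ^ 2 - 1 / e) * Real.log ((e * t - 1) / (e * t + 1)))) t := by
  obtain ⟨h1, h2, hP⟩ := aux_pos he ht
  have hSpos : 0 < Real.sqrt (e * t ^ 2 - 1 / e) := Real.sqrt_pos.mpr hP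
  have hid : HasDerivAt (fun s : ℝ => e * s) e t := by
    simpa using (hasDerivAt_id t).const_mul e
  have hnum := (hid.mul (dlog he ht)).add_const 2
  have hdiv := hnum.div (dsqrt he ht) hSpos.ne'
  refine hdiv.congr_deriv ?_
  simp only [Pi.mul_apply]
  set S := Real.sqrt (e * t ^ 2 - 1 / e) with hSdef
  set Lg := Real.log ((e * t - 1) / (e * t + 1)) with hLdef
  have hPS : S ^ 2 = e * t ^ 2 - 1 / e := Real.sq_sqrt hP.le
  have hS2r : S ^ 2 * e = e ^ 2 * t ^ 2 - 1 := by
    rw [hPS]; field_simp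
  rw [← hPS]
  field_simp
  linear_combination Lg * hS2r

/-- Proposition 5.1 (nonzero energy `e > 0`): with `φ(t) = √(e t² − 1/e)` and
`E_ω(t) = ((et−1)/(et+1))^ω`, the function `x = φ·E_ω` solves
`x'' = −(1−4ω²)·φ⁻⁴·x` on `(1/e, ∞)`; and for `ω = 0`, `x = φ·log((et−1)/(et+1))`
solves `x'' = −φ⁻⁴·x` there. -/
theorem stmt_12 (e : ℝ) (he : 0 < e) (ω : ℂ) :
    (∀ t : ℝ, 1 / e < t →
      HasDerivAt (deriv (fun s : ℝ =>
          (Real.sqrt (e * s ^ 2 - 1 / e) : ℂ) *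
            Complex.exp (ω * (Real.log ((e * s - 1) / (e * s + 1)) : ℂ))))
        (-(1 - 4 * ω ^ 2) / ((e * t ^ 2 - 1 / e : ℝ) : ℂ) ^ 2 *
          ((Real.sqrt (e * t ^ 2 - 1 / e) : ℂ) *
            Complex.exp (ω * (Real.log ((e * t - 1) / (e * t + 1)) : ℂ)))) t) ∧
    (∀ t : ℝ, 1 / e < t →
      HasDerivAt (deriv (fun s : ℝ =>
          (Real.sqrt (e * s ^ 2 - 1 / e) : ℂ) *
            (Real.log ((e * s - 1) / (e * s + 1)) : ℂ)))
        (-1 / ((e * t ^ 2 - 1 / e : ℝ) : ℂ) ^ 2 *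
          ((Real.sqrt (e * t ^ 2 - 1 / e) : ℂ) *
            (Real.log ((e * t - 1) / (e * t + 1)) : ℂ))) t) := by

  constructor
  · intro t ht
    have hev : ∀ᶠ s in nhds t, s ∈ Set.Ioi (1 / e) := isOpen_Ioi.eventually_mem ht
    have heq : deriv (fun s : ℝ =>
          (Real.sqrt (e * s ^ 2 - 1 / e) : ℂ) *
            Complex.exp (ω * (Real.log ((e * s - 1) / (e * s + 1)) : ℂ)))
        =ᶠ[nhds t] fun s : ℝ =>
          (((e * s : ℝ) : ℂ) + 2 * ω) / (Real.sqrt (e * s ^ 2 - 1 / e) : ℂ) *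
            Complex.exp (ω * (Real.log ((e * s - 1) / (e * s + 1)) : ℂ)) :=
      hev.mono fun s hs => (d1 he hs ω).deriv
    exact (d2 he ht ω).congr_of_eventuallyEq heq
  · intro t ht
    have hev : ∀ᶠ s in nhds t, s ∈ Set.Ioi (1 / e) := isOpen_Ioi.eventually_mem ht
    have h1c : ∀ s : ℝ, 1 / e < s →
        HasDerivAt (fun s : ℝ =>
            (Real.sqrt (e * s ^ 2 - 1 / e) : ℂ) *
              (Real.log ((e * s - 1) / (e * s + 1)) : ℂ))
          (((e * s * Real.log ((e * s - 1) / (e * s + 1)) + 2) /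
              Real.sqrt (e * s ^ 2 - 1 / e) : ℝ) : ℂ) s := by
      intro s hs
      have := (d1r he hs).ofReal_comp
      simpa only [Complex.ofReal_mul] using this
    have heq : deriv (fun s : ℝ =>
          (Real.sqrt (e * s ^ 2 - 1 / e) : ℂ) *
            (Real.log ((e * s - 1) / (e * s + 1)) : ℂ))
        =ᶠ[nhds t] fun s : ℝ =>
          (((e * s * Real.log ((e * s - 1) / (e * s + 1)) + 2) /
              Real.sqrt (e * s ^ 2 - 1 / e) : ℝ) : ℂ) :=
      hev.mono fun s hs => (h1c s hs).deriv
    have h2c := (d2r he ht).ofReal_comp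
    refine HasDerivAt.congr_of_eventuallyEq ?_ heq
    refine h2c.congr_deriv ?_
    push_cast
    ring
end

section
/- Let J ⊆ ℝ be an open interval and let u : J → ℂ, I : J → ℂ and, for each ω ∈ ℂ, E_ω : J → ℂ be differentiable functions satisfying: E_ω'(t) = 2ω·u(t)·E_ω(t) and I'(t) = 2·u(t) for all t ∈ J, together with E_ω·E_{ω'} = E_{ω+ω'} (pointwise product) and E₀ = 1. Let B be the ℂ-linear span of the family of functions {I^m·E_ω : m ∈ ℕ, ω ∈ ℂ} inside the functions J → ℂ. Then for every b ∈ B there exists Φ ∈ B with Φ'(t) = u(t)·b(t) for all t ∈ J. (This is Lemma 5.1: every ∫ b/φ² with b ∈ B again lies in B, where u = 1/φ².) -/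
/-- Lemma 5.1 (abstract form): with `E_ω' = 2ω u E_ω`, `I' = 2u`,
`E_ω E_{ω'} = E_{ω+ω'}`, `E₀ = 1` on an open interval `J`, the `ℂ`-span `B` of
the functions `I^m E_ω` is closed under `b ↦ ∫ u·b`: for every `b ∈ B` there is
`Φ ∈ B` with `Φ' = u·b` on `J`. -/
theorem stmt_14 (J : Set ℝ) (hJo : IsOpen J) (hJc : J.OrdConnected)
    (u I : ℝ → ℂ) (E : ℂ → ℝ → ℂ)
    (hE : ∀ (ω : ℂ) (t : ℝ), t ∈ J → HasDerivAt (E ω) (2 * ω * u t * E ω t) t)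
    (hI : ∀ t ∈ J, HasDerivAt I (2 * u t) t)
    (hmul : ∀ (ω ω' : ℂ) (t : ℝ), t ∈ J → E ω t * E ω' t = E (ω + ω') t)
    (hE0 : ∀ t ∈ J, E 0 t = 1) :
    ∀ b ∈ Submodule.span ℂ
        {f : ℝ → ℂ | ∃ (m : ℕ) (ω : ℂ), f = fun t => I t ^ m * E ω t},
      ∃ Φ ∈ Submodule.span ℂ
          {f : ℝ → ℂ | ∃ (m : ℕ) (ω : ℂ), f = fun t => I t ^ m * E ω t},
        ∀ t ∈ J, HasDerivAt Φ (u t * b t) t := by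
  set S : Set (ℝ → ℂ) := {f : ℝ → ℂ | ∃ (m : ℕ) (ω : ℂ), f = fun t => I t ^ m * E ω t}
    with hS
  -- derivative of a generator
  have hgen : ∀ (m : ℕ) (ω : ℂ) (t : ℝ), t ∈ J →
      HasDerivAt (fun t => I t ^ m * E ω t)
        (2 * m * u t * (I t ^ (m - 1) * E ω t) + 2 * ω * u t * (I t ^ m * E ω t)) t := by
    intro m ω t ht
    have h0 : HasDerivAt (fun t => I t ^ m) ((m : ℂ) * I t ^ (m - 1) * (2 * u t)) t := by
      simpa [Function.comp_def, mul_assoc] using (hasDerivAt_pow m (I t)).comp t (hI t ht)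
    have h1 := h0.mul (hE ω t ht)
    refine h1.congr_deriv ?_
    ring
  -- key lemma: each generator has an antiderivative in the span
  have key : ∀ (m : ℕ) (ω : ℂ), ∃ Φ ∈ Submodule.span ℂ S,
      ∀ t ∈ J, HasDerivAt Φ (u t * (I t ^ m * E ω t)) t := by
    intro m ω
    rcases eq_or_ne ω 0 with rfl | hω
    · refine ⟨(1 / (2 * ((m : ℂ) + 1))) • (fun t => I t ^ (m + 1) * E 0 t), ?_, ?_⟩
      · exact Submodule.smul_mem _ _ (Submodule.subset_span ⟨m + 1, 0, rfl⟩)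
      · intro t ht
        have h := (hgen (m + 1) 0 t ht).const_smul (1 / (2 * ((m : ℂ) + 1)))
        refine h.congr_deriv ?_
        have hm1 : ((m : ℂ) + 1) ≠ 0 := Nat.cast_add_one_ne_zero m
        rw [hE0 t ht]
        simp only [smul_eq_mul]
        push_cast
        field_simp
        ring
    · induction m with
      | zero =>
        refine ⟨(1 / (2 * ω)) • (fun t => I t ^ 0 * E ω t), ?_, ?_⟩
        · exact Submodule.smul_mem _ _ (Submodule.subset_span ⟨0, ω, rfl⟩)
        · intro t ht
          have h := (hgen 0 ω t ht).const_smul (1 / (2 * ω))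
          refine h.congr_deriv ?_
          simp only [smul_eq_mul]
          field_simp
          ring
      | succ m ih =>
        obtain ⟨Ψ, hΨmem, hΨ⟩ := ih
        refine ⟨(1 / (2 * ω)) • (fun t => I t ^ (m + 1) * E ω t)
            - (((m : ℂ) + 1) / ω) • Ψ, ?_, ?_⟩
        · exact Submodule.sub_mem _
            (Submodule.smul_mem _ _ (Submodule.subset_span ⟨m + 1, ω, rfl⟩))
            (Submodule.smul_mem _ _ hΨmem)
        · intro t ht
          have h := ((hgen (m + 1) ω t ht).const_smul (1 / (2 * ω))).sub
            ((hΨ t ht).const_smul (((m : ℂ) + 1) / ω))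
          refine h.congr_deriv ?_
          simp only [smul_eq_mul, Nat.add_sub_cancel]
          push_cast
          field_simp
          ring
  -- span induction
  intro b hb
  induction hb using Submodule.span_induction with
  | mem f hf =>
    obtain ⟨m, ω, rfl⟩ := hf
    exact key m ω
  | zero =>
    refine ⟨0, Submodule.zero_mem _, fun t ht => ?_⟩
    simpa using hasDerivAt_const t (0 : ℂ)
  | add f g hf hg ihf ihg =>
    obtain ⟨Φ₁, h₁mem, h₁⟩ := ihf
    obtain ⟨Φ₂, h₂mem, h₂⟩ := ihg
    refine ⟨Φ₁ + Φ₂, Submodule.add_mem _ h₁mem h₂mem, fun t ht => ?_⟩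
    have := (h₁ t ht).add (h₂ t ht)
    refine this.congr_deriv ?_
    simp [mul_add]
  | smul c f hf ihf =>
    obtain ⟨Φ, hmem, hΦ⟩ := ihf
    refine ⟨c • Φ, Submodule.smul_mem _ _ hmem, fun t ht => ?_⟩
    have := (hΦ t ht).const_smul c
    refine this.congr_deriv ?_
    simp [smul_eq_mul]
    ring
end

section
/- Let B denote the ℂ-linear span, inside the space of functions (0,∞) → ℂ, of the functions t ↦ (log t)^m · t^ω for m ∈ ℕ and ω ∈ ℂ, where t^ω := exp(ω · log t). Let λ ∈ ℂ and b ∈ B. Then every twice differentiable function x : (0,∞) → ℂ satisfying x''(t) = −λ/(4t²)·x(t) + b(t)/(2t)^{3/2} for all t > 0 can be written as x(t) = √(2t)·g(t) for some g ∈ B. (This is Lemma 5.2 for the zero-energy phase curve, where φ(t) = √(2t), so φ⁴ = 4t² and φ³ = (2t)^{3/2}.) -/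
open Complex

noncomputable def leFun (m : ℕ) (ω : ℂ) : ℝ → ℂ :=
  fun t => ((Real.log t : ℂ)) ^ m * Complex.exp (ω * (Real.log t : ℂ))

noncomputable def logExpSpan : Submodule ℂ (ℝ → ℂ) :=
  Submodule.span ℂ
    {f : ℝ → ℂ | ∃ (m : ℕ) (ω : ℂ),
      f = fun t => ((Real.log t : ℂ)) ^ m * Complex.exp (ω * (Real.log t : ℂ))}

lemma leFun_mem (m : ℕ) (ω : ℂ) : leFun m ω ∈ logExpSpan :=
  Submodule.subset_span ⟨m, ω, rfl⟩

lemma hasDerivAt_clog {t : ℝ} (ht : 0 < t) :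
    HasDerivAt (fun s : ℝ => ((Real.log s : ℂ))) ((t : ℂ)⁻¹) t := by
  have := (Real.hasDerivAt_log ht.ne').ofReal_comp
  simpa using this

lemma hasDerivAt_clog_pow (m : ℕ) {t : ℝ} (ht : 0 < t) :
    HasDerivAt (fun s : ℝ => ((Real.log s : ℂ)) ^ m)
      ((m : ℂ) * ((Real.log t : ℂ)) ^ (m - 1) * (t : ℂ)⁻¹) t := by
  have := ((Real.hasDerivAt_log ht.ne').pow m).ofReal_comp
  have he : (fun s : ℝ => ((Real.log s ^ m : ℝ) : ℂ)) = fun s : ℝ => ((Real.log s : ℂ)) ^ m := by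
    ext s; push_cast; ring
  simp only [Pi.pow_apply] at this
  rw [he] at this
  convert this using 1
  push_cast
  ring

lemma hasDerivAt_leFun (m : ℕ) (ω : ℂ) {t : ℝ} (ht : 0 < t) :
    HasDerivAt (leFun m ω)
      (((m : ℂ) * ((Real.log t : ℂ)) ^ (m - 1) + ω * ((Real.log t : ℂ)) ^ m) *
        Complex.exp (ω * (Real.log t : ℂ)) / t) t := by
  have h2 : HasDerivAt (fun s : ℝ => Complex.exp (ω * (Real.log s : ℂ)))
      (Complex.exp (ω * (Real.log t : ℂ)) * (ω * (t : ℂ)⁻¹)) t :=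
    ((hasDerivAt_clog ht).const_mul ω).cexp
  have := (hasDerivAt_clog_pow m ht).mul h2
  convert this using 1
  · rfl
  · rfl
  have : (t : ℂ) ≠ 0 := by exact_mod_cast ht.ne'
  field_simp

lemma mem_smul' (c : ℂ) {f : ℝ → ℂ} (hf : f ∈ logExpSpan) :
    (fun t => c * f t) ∈ logExpSpan := by
  have := Submodule.smul_mem logExpSpan c hf
  convert this using 1
  rfl

lemma mem_sub' {f g : ℝ → ℂ} (hf : f ∈ logExpSpan) (hg : g ∈ logExpSpan) :
    (fun t => f t - g t) ∈ logExpSpan := by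
  have := Submodule.sub_mem logExpSpan hf hg
  convert this using 1
  rfl

lemma antider_basis (m : ℕ) (ω : ℂ) :
    ∃ H ∈ logExpSpan, ∀ t : ℝ, 0 < t → HasDerivAt H (leFun m ω t / t) t := by
  rcases eq_or_ne ω 0 with rfl | hω
  · refine ⟨fun t => ((m : ℂ) + 1)⁻¹ * leFun (m + 1) 0 t,
      mem_smul' _ (leFun_mem (m + 1) 0), fun t ht => ?_⟩
    have h := (hasDerivAt_leFun (m + 1) 0 ht).const_mul (((m : ℂ) + 1)⁻¹)
    convert h using 1
    · rfl
    have hm : ((m : ℂ) + 1) ≠ 0 := Nat.cast_add_one_ne_zero m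
    simp only [leFun, Nat.add_sub_cancel, zero_mul, Complex.exp_zero, Nat.cast_add,
      Nat.cast_one]
    field_simp
    ring
  · induction m with
    | zero =>
        refine ⟨fun t => ω⁻¹ * leFun 0 ω t, mem_smul' _ (leFun_mem 0 ω), fun t ht => ?_⟩
        have h := (hasDerivAt_leFun 0 ω ht).const_mul ω⁻¹
        convert h using 1
        · rfl
        simp only [leFun, pow_zero, Nat.cast_zero, zero_mul]
        field_simp
        ring
    | succ m ih =>
        obtain ⟨Hm, hHm, hHd⟩ := ih
        refine ⟨fun t => ω⁻¹ * leFun (m + 1) ω t - (((m : ℂ) + 1) / ω) * Hm t,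
          mem_sub' (mem_smul' _ (leFun_mem (m + 1) ω)) (mem_smul' _ hHm),
          fun t ht => ?_⟩
        have h := ((hasDerivAt_leFun (m + 1) ω ht).const_mul ω⁻¹).sub
          ((hHd t ht).const_mul (((m : ℂ) + 1) / ω))
        convert h using 1
        · rfl
        · rfl
        have htc : (t : ℂ) ≠ 0 := by exact_mod_cast ht.ne'
        simp only [leFun, Nat.add_sub_cancel, Nat.cast_add, Nat.cast_one]
        field_simp
        ring

lemma antider {h : ℝ → ℂ} (hh : h ∈ logExpSpan) :
    ∃ H ∈ logExpSpan, ∀ t : ℝ, 0 < t → HasDerivAt H (h t / t) t := by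
  induction hh using Submodule.span_induction with
  | mem f hf =>
      obtain ⟨m, ω, rfl⟩ := hf
      exact antider_basis m ω
  | zero => exact ⟨0, Submodule.zero_mem _, fun t ht => by simpa using hasDerivAt_const t (0 : ℂ)⟩
  | add f g hf hg ihf ihg =>
      obtain ⟨F, hF, hFd⟩ := ihf
      obtain ⟨G, hG, hGd⟩ := ihg
      refine ⟨F + G, Submodule.add_mem _ hF hG, fun t ht => ?_⟩
      have := (hFd t ht).add (hGd t ht)
      simpa [add_div] using this
  | smul c f hf ihf =>
      obtain ⟨F, hF, hFd⟩ := ihf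
      refine ⟨c • F, Submodule.smul_mem _ c hF, fun t ht => ?_⟩
      have := (hFd t ht).const_mul c
      simp only [Pi.smul_apply, smul_eq_mul]
      convert this using 1
      · rfl
      · rfl
      ring

lemma mem_mul_exp {f : ℝ → ℂ} (hf : f ∈ logExpSpan) (r : ℂ) :
    (fun t => f t * Complex.exp (r * (Real.log t : ℂ))) ∈ logExpSpan := by
  induction hf using Submodule.span_induction with
  | mem g hg =>
      obtain ⟨m, ω, rfl⟩ := hg
      have : (fun t : ℝ => (((Real.log t : ℂ)) ^ m * Complex.exp (ω * (Real.log t : ℂ))) *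
          Complex.exp (r * (Real.log t : ℂ))) = leFun m (ω + r) := by
        ext t
        simp only [leFun, ← Complex.exp_add, add_mul, mul_assoc]
      rw [this]
      exact leFun_mem m (ω + r)
  | zero =>
      have := Submodule.zero_mem logExpSpan
      convert this using 1
      ext t; simp
  | add g h hg hh ihg ihh =>
      have := Submodule.add_mem logExpSpan ihg ihh
      convert this using 1
      ext t
      simp [add_mul]
  | smul c g hg ihg =>
      have := Submodule.smul_mem logExpSpan c ihg
      convert this using 1
      ext t
      simp [mul_assoc]

lemma solve1 (r : ℂ) {F : ℝ → ℂ} (hF : F ∈ logExpSpan) (w w' : ℝ → ℂ)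
    (hw : ∀ t : ℝ, 0 < t → HasDerivAt w (w' t) t)
    (heq : ∀ t : ℝ, 0 < t → (t : ℂ) * w' t - r * w t = F t) :
    ∃ g ∈ logExpSpan, ∀ t : ℝ, 0 < t → w t = g t := by
  set E : ℝ → ℂ := fun t => Complex.exp (-r * (Real.log t : ℂ)) with hE
  have hFE : (fun t => F t * E t) ∈ logExpSpan := mem_mul_exp hF (-r)
  obtain ⟨H, hH, hHd⟩ := antider hFE
  set W : ℝ → ℂ := fun t => w t * E t - H t with hW
  have hWd : ∀ t : ℝ, 0 < t → HasDerivAt W 0 t := by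
    intro t ht
    have htc : (t : ℂ) ≠ 0 := by exact_mod_cast ht.ne'
    have hEd : HasDerivAt E (E t * (-r * (t : ℂ)⁻¹)) t :=
      ((hasDerivAt_clog ht).const_mul (-r)).cexp
    have h1 : HasDerivAt (fun s => w s * E s) (w' t * E t + w t * (E t * (-r * (t : ℂ)⁻¹))) t :=
      (hw t ht).mul hEd
    have h2 := h1.sub (hHd t ht)
    convert h2 using 1
    · rfl
    · rfl
    have hq := heq t ht
    field_simp
    linear_combination (-(E t)) * hq
  -- W is constant on Ioi 0
  have hconst : ∀ t : ℝ, 0 < t → W t = W 1 := by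
    intro t ht
    have hdiff : DifferentiableOn ℝ W (Set.Ioi (0 : ℝ)) := fun s hs =>
      (hWd s hs).differentiableAt.differentiableWithinAt
    have hzero : ∀ s ∈ Set.Ioi (0 : ℝ), fderivWithin ℝ W (Set.Ioi (0 : ℝ)) s = 0 := by
      intro s hs
      rw [fderivWithin_of_isOpen isOpen_Ioi hs, (hWd s hs).hasFDerivAt.fderiv]
      ext
      simp
    exact (convex_Ioi (0 : ℝ)).is_const_of_fderivWithin_eq_zero hdiff hzero ht
      (Set.mem_Ioi.mpr one_pos)
  refine ⟨fun t => (H t + W 1) * Complex.exp (r * (Real.log t : ℂ)), ?_, ?_⟩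
  · have hmem : (fun t => H t + W 1 * leFun 0 0 t) ∈ logExpSpan :=
      Submodule.add_mem _ hH (mem_smul' _ (leFun_mem 0 0))
    have := mem_mul_exp hmem r
    convert this using 1
    ext t
    simp [leFun]
  · intro t ht
    have hc := hconst t ht
    have hne : E t * Complex.exp (r * (Real.log t : ℂ)) = 1 := by
      rw [← Complex.exp_add]
      simp
    have h1 : w t * E t = H t + W 1 := by
      simp only [hW] at hc
      linear_combination hc
    calc w t = w t * (E t * Complex.exp (r * (Real.log t : ℂ))) := by rw [hne, mul_one]
      _ = (w t * E t) * Complex.exp (r * (Real.log t : ℂ)) := by ring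
      _ = (H t + W 1) * Complex.exp (r * (Real.log t : ℂ)) := by rw [h1]

lemma sqrt_as_cexp {t : ℝ} (ht : 0 < t) :
    ((Real.sqrt t : ℝ) : ℂ) = Complex.exp ((1/2 : ℂ) * (Real.log t : ℂ)) := by
  rw [show Real.sqrt t = Real.exp (Real.log t * (1/2)) by
      rw [Real.sqrt_eq_rpow, Real.rpow_def_of_pos ht]]
  rw [Complex.ofReal_exp]
  push_cast
  ring_nf

/-- Lemma 5.2 at zero energy (`φ(t) = √(2t)`): if `b ∈ B` and `x` is twice
differentiable on `(0,∞)` with `x'' = −λ/(4t²)·x + b/(2t)^{3/2}`, then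
`x = √(2t)·g` for some `g ∈ B`. -/
theorem stmt_15 (lam : ℂ) (b : ℝ → ℂ) (hb : b ∈ logExpSpan)
    (x : ℝ → ℂ)
    (hx1 : ∀ t : ℝ, 0 < t → DifferentiableAt ℝ x t)
    (hx2 : ∀ t : ℝ, 0 < t → DifferentiableAt ℝ (deriv x) t)
    (hx : ∀ t : ℝ, 0 < t →
      deriv (deriv x) t =
        -lam / (4 * (t : ℂ) ^ 2) * x t + b t / ((Real.sqrt (2 * t) : ℂ)) ^ 3) :
    ∃ g ∈ logExpSpan, ∀ t : ℝ, 0 < t → x t = (Real.sqrt (2 * t) : ℂ) * g t := by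
  -- square root of the discriminant
  set s : ℂ := (1 - lam) ^ ((1 : ℂ)/2) with hs_def
  have hs : s ^ 2 = 1 - lam := by
    rcases eq_or_ne (1 - lam) 0 with h0 | h0
    · rw [hs_def, h0, Complex.zero_cpow (by norm_num)]
      simpa using h0.symm
    · rw [hs_def, sq, ← Complex.cpow_add _ _ h0]
      norm_num
  set r₁ : ℂ := (1 + s) / 2 with hr1
  set r₂ : ℂ := (1 - s) / 2 with hr2
  -- forcing term
  set F : ℝ → ℂ := fun t => ((2 : ℂ) * (Real.sqrt 2 : ℂ))⁻¹ *
    (b t * Complex.exp ((1/2 : ℂ) * (Real.log t : ℂ))) with hF_def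
  have hF : F ∈ logExpSpan := mem_smul' _ (mem_mul_exp hb (1/2))
  have hs2c : ((Real.sqrt 2 : ℝ) : ℂ) ^ 2 = 2 := by
    norm_cast
    exact Real.sq_sqrt (by norm_num)
  have hs2ne : ((Real.sqrt 2 : ℝ) : ℂ) ≠ 0 := by
    intro h
    have : ((Real.sqrt 2 : ℝ) : ℂ) ^ 2 = 0 := by rw [h]; ring
    rw [hs2c] at this
    norm_num at this
  have hFval : ∀ t : ℝ, 0 < t →
      (t : ℂ) ^ 2 * deriv (deriv x) t + (lam / 4) * x t = F t := by
    intro t ht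
    have htc : (t : ℂ) ≠ 0 := by exact_mod_cast ht.ne'
    have hstc : ((Real.sqrt t : ℝ) : ℂ) ^ 2 = (t : ℂ) := by
      norm_cast
      exact Real.sq_sqrt ht.le
    have hstne : ((Real.sqrt t : ℝ) : ℂ) ≠ 0 := by
      intro h
      rw [h] at hstc
      exact htc (by rw [← hstc]; ring)
    have hcube : ((Real.sqrt (2 * t) : ℝ) : ℂ) ^ 3 =
        2 * (Real.sqrt 2 : ℂ) * (t : ℂ) * ((Real.sqrt t : ℝ) : ℂ) := by
      have h1 : ((Real.sqrt (2 * t) : ℝ) : ℂ) = (Real.sqrt 2 : ℂ) * (Real.sqrt t : ℂ) := by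
        rw [Real.sqrt_mul (by norm_num) t]; push_cast; ring
      rw [h1]
      linear_combination (((Real.sqrt 2 : ℝ) : ℂ) * ((Real.sqrt t : ℝ) : ℂ) ^ 3) * hs2c +
        (2 * ((Real.sqrt 2 : ℝ) : ℂ) * ((Real.sqrt t : ℝ) : ℂ)) * hstc
    rw [hx t ht, hcube]
    simp only [hF_def]
    rw [← sqrt_as_cexp ht]
    have e1 : (t : ℂ) ^ 2 * (-lam / (4 * (t : ℂ) ^ 2) * x t) = -(lam / 4) * x t := by
      field_simp
    have e2 : (t : ℂ) ^ 2 *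
        (b t / (2 * ((Real.sqrt 2 : ℝ) : ℂ) * (t : ℂ) * ((Real.sqrt t : ℝ) : ℂ))) =
        (2 * ((Real.sqrt 2 : ℝ) : ℂ))⁻¹ * (b t * ((Real.sqrt t : ℝ) : ℂ)) := by
      rw [inv_mul_eq_div, mul_div_assoc',
        div_eq_div_iff (by simp [htc, hs2ne, hstne]) (by simp [hs2ne])]
      linear_combination (-(2 * ((Real.sqrt 2 : ℝ) : ℂ) * b t * (t : ℂ))) * hstc
    linear_combination e1 + e2
  -- first reduction: u = t x' - r₁ x satisfies t u' - r₂ u = F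
  set u : ℝ → ℂ := fun t => (t : ℂ) * deriv x t - r₁ * x t with hu_def
  set u' : ℝ → ℂ := fun t =>
    (deriv x t + (t : ℂ) * deriv (deriv x) t) - r₁ * deriv x t with hu'_def
  have hu : ∀ t : ℝ, 0 < t → HasDerivAt u (u' t) t := by
    intro t ht
    have hid : HasDerivAt (fun s : ℝ => ((s : ℝ) : ℂ)) 1 t := by
      simpa using (hasDerivAt_id t).ofReal_comp
    have h1 : HasDerivAt (fun s : ℝ => ((s : ℝ) : ℂ) * deriv x s)
        (1 * deriv x t + (t : ℂ) * deriv (deriv x) t) t :=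
      hid.mul ((hx2 t ht).hasDerivAt)
    have h2 : HasDerivAt (fun s : ℝ => r₁ * x s) (r₁ * deriv x t) t :=
      ((hx1 t ht).hasDerivAt).const_mul r₁
    have h3 := h1.sub h2
    simp only [hu_def, hu'_def]
    convert h3 using 1
    · rfl
    · rfl
    ring
  have heq2 : ∀ t : ℝ, 0 < t → (t : ℂ) * u' t - r₂ * u t = F t := by
    intro t ht
    have hFv := hFval t ht
    simp only [hu'_def, hu_def, hr1, hr2]
    linear_combination hFv - (x t / 4) * hs
  obtain ⟨g₁, hg₁, hg₁eq⟩ := solve1 r₂ hF u u' hu heq2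
  have heq1 : ∀ t : ℝ, 0 < t → (t : ℂ) * deriv x t - r₁ * x t = g₁ t := by
    intro t ht
    have := hg₁eq t ht
    simpa [hu_def] using this
  obtain ⟨X, hX, hXeq⟩ := solve1 r₁ hg₁ x (deriv x)
    (fun t ht => (hx1 t ht).hasDerivAt) heq1
  refine ⟨fun t => ((Real.sqrt 2 : ℝ) : ℂ)⁻¹ *
      (X t * Complex.exp (-(1/2 : ℂ) * (Real.log t : ℂ))), 
    mem_smul' _ (mem_mul_exp hX (-(1/2))), fun t ht => ?_⟩
  have h2t : ((Real.sqrt (2 * t) : ℝ) : ℂ) = (Real.sqrt 2 : ℂ) * (Real.sqrt t : ℂ) := by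
    rw [Real.sqrt_mul (by norm_num) t]; push_cast; ring
  have hexp : ((Real.sqrt t : ℝ) : ℂ) * Complex.exp (-(1/2 : ℂ) * (Real.log t : ℂ)) = 1 := by
    rw [sqrt_as_cexp ht, ← Complex.exp_add]
    ring_nf
    exact Complex.exp_zero
  rw [hXeq t ht, h2t]
  calc X t = (((Real.sqrt 2 : ℝ) : ℂ) * ((Real.sqrt 2 : ℝ) : ℂ)⁻¹) *
        (X t * (((Real.sqrt t : ℝ) : ℂ) * Complex.exp (-(1/2 : ℂ) * (Real.log t : ℂ)))) := by
        rw [mul_inv_cancel₀ hs2ne, hexp, mul_one, one_mul]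
    _ = (Real.sqrt 2 : ℂ) * (Real.sqrt t : ℂ) *
        (((Real.sqrt 2 : ℝ) : ℂ)⁻¹ * (X t * Complex.exp (-(1/2 : ℂ) * (Real.log t : ℂ)))) := by
        ring
end

section
/- Let B denote the ℂ-linear span, inside the space of functions (0,∞) → ℂ, of the functions t ↦ (log t)^m · t^ω for m ∈ ℕ and ω ∈ ℂ, where t^ω := exp(ω · log t). Let λ ∈ ℂ and let x, y : (0,∞) → ℂ be twice differentiable with x''(t) = −λ/(4t²)·x(t) and y''(t) = (−λ·y(t) + x(t))/(4t²) for all t > 0 (a Jordan-block subsystem of the first variational equation of a degree −2 potential with non-diagonalisable Hessian, at zero energy where φ(t) = √(2t)). Then there exist g, h ∈ B such that x(t) = √(2t)·g(t) and y(t) = √(2t)·h(t) for all t > 0. -/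
/-- auxiliary definitions and lemmas -/
noncomputable def ee (m : ℕ) (ω : ℂ) : ℝ → ℂ :=
  fun t => ((Real.log t : ℂ)) ^ m * Complex.exp (ω * (Real.log t : ℂ))

lemma ee_mem (m : ℕ) (ω : ℂ) : ee m ω ∈ logExpSpan :=
  Submodule.subset_span ⟨m, ω, rfl⟩

lemma const_mem (c : ℂ) : (fun _ : ℝ => c) ∈ logExpSpan := by
  have h : (fun _ : ℝ => c) = c • ee 0 0 := by
    funext t; simp [ee]
  rw [h]; exact Submodule.smul_mem _ _ (ee_mem 0 0)

lemma mul_mem' (m : ℕ) (ω : ℂ) {p : ℝ → ℂ} (hp : p ∈ logExpSpan) :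
    (fun t => ee m ω t * p t) ∈ logExpSpan := by
  induction hp using Submodule.span_induction with
  | mem f hf =>
    obtain ⟨n, ω', rfl⟩ := hf
    have h : (fun t => ee m ω t * (((Real.log t : ℂ)) ^ n * Complex.exp (ω' * (Real.log t : ℂ))))
        = ee (m + n) (ω + ω') := by
      funext t
      simp only [ee, pow_add, add_mul, Complex.exp_add]
      ring
    rw [h]; exact ee_mem _ _
  | zero =>
    have h : (fun t => ee m ω t * (0 : ℝ → ℂ) t) = (fun _ : ℝ => (0:ℂ)) := by
      funext t; simp
    rw [h]; exact const_mem 0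
  | add f g hf hg ihf ihg =>
    have h : (fun t => ee m ω t * (f + g) t) = (fun t => ee m ω t * f t) + (fun t => ee m ω t * g t) := by
      funext t; simp [mul_add]
    rw [h]; exact Submodule.add_mem _ ihf ihg
  | smul c f hf ihf =>
    have h : (fun t => ee m ω t * (c • f) t) = c • fun t => ee m ω t * f t := by
      funext t; simp; ring
    rw [h]; exact Submodule.smul_mem _ _ ihf

lemma exp_log_c {t : ℝ} (ht : 0 < t) : Complex.exp ((Real.log t : ℂ)) = t := by
  rw [← Complex.ofReal_exp, Real.exp_log ht]

lemma ee_sub_one (m : ℕ) (ω : ℂ) {t : ℝ} (ht : 0 < t) :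
    ee m (ω - 1) t = ee m ω t * (t : ℂ)⁻¹ := by
  simp only [ee, sub_mul, one_mul, Complex.exp_sub, exp_log_c ht]
  ring

lemma hasDerivAt_ee (m : ℕ) (ω : ℂ) {t : ℝ} (ht : 0 < t) :
    HasDerivAt (ee m ω) ((m : ℂ) * ee (m - 1) (ω - 1) t + ω * ee m (ω - 1) t) t := by
  have hL : HasDerivAt (fun s : ℝ => ((Real.log s : ℂ))) ((t⁻¹ : ℝ) : ℂ) t :=
    (Real.hasDerivAt_log ht.ne').ofReal_comp
  have hpow : HasDerivAt (fun s : ℝ => ((Real.log s : ℂ)) ^ m)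
      ((m : ℂ) * ((Real.log t : ℂ)) ^ (m - 1) * ((t⁻¹ : ℝ) : ℂ)) t := by
    have := (hasDerivAt_pow m ((Real.log t : ℂ))).comp t hL
    simpa [Function.comp_def, mul_assoc] using this
  have hexp : HasDerivAt (fun s : ℝ => Complex.exp (ω * (Real.log s : ℂ)))
      (Complex.exp (ω * (Real.log t : ℂ)) * (ω * ((t⁻¹ : ℝ) : ℂ))) t :=
    (hL.const_mul ω).cexp
  have := hpow.mul hexp
  refine this.congr_deriv (Eq.symm ?_)
  rw [ee_sub_one m ω ht, ee_sub_one (m-1) ω ht]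
  simp only [ee, Complex.ofReal_inv]
  ring

lemma antider_ee (m : ℕ) (ω : ℂ) :
    ∃ P ∈ logExpSpan, ∀ t : ℝ, 0 < t → HasDerivAt P (ee m ω t) t := by
  induction m with
  | zero =>
    by_cases hω : ω = -1
    · refine ⟨ee 1 0, ee_mem 1 0, fun t ht => ?_⟩
      have := hasDerivAt_ee 1 0 ht
      simpa [hω] using this
    · refine ⟨(ω + 1)⁻¹ • ee 0 (ω + 1), Submodule.smul_mem _ _ (ee_mem 0 (ω+1)), fun t ht => ?_⟩
      have h1 := (hasDerivAt_ee 0 (ω + 1) ht).const_smul ((ω + 1)⁻¹)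
      have hne : ω + 1 ≠ 0 := by
        intro h; apply hω; linear_combination h
      refine h1.congr_deriv (Eq.symm ?_)
      have : ω + 1 - 1 = ω := by ring
      rw [this]
      simp only [smul_eq_mul, Nat.cast_zero]
      field_simp
      ring
  | succ m ih =>
    by_cases hω : ω = -1
    · refine ⟨(((m : ℂ) + 2))⁻¹ • ee (m + 2) 0, Submodule.smul_mem _ _ (ee_mem _ _), fun t ht => ?_⟩
      have h1 := (hasDerivAt_ee (m + 2) 0 ht).const_smul ((((m : ℂ) + 2))⁻¹)
      have hne : ((m : ℂ) + 2) ≠ 0 := by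
        intro h
        have : (0:ℝ) ≤ (m:ℝ) := Nat.cast_nonneg m
        have h2 := congrArg Complex.re h
        simp [Complex.add_re] at h2
        linarith
      refine h1.congr_deriv (Eq.symm ?_)
      subst hω
      simp only [smul_eq_mul, Nat.add_sub_cancel]
      have h0 : (0:ℂ) - 1 = -1 := by ring
      rw [h0]
      push_cast
      field_simp
      ring
    · obtain ⟨P, hPmem, hP⟩ := ih
      refine ⟨(ω + 1)⁻¹ • ee (m + 1) (ω + 1) - ((((m:ℂ) + 1)) * (ω + 1)⁻¹) • P,
        Submodule.sub_mem _ (Submodule.smul_mem _ _ (ee_mem _ _)) (Submodule.smul_mem _ _ hPmem),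
        fun t ht => ?_⟩
      have hne : ω + 1 ≠ 0 := by
        intro h; apply hω; linear_combination h
      have h1 := ((hasDerivAt_ee (m + 1) (ω + 1) ht).const_smul ((ω + 1)⁻¹)).sub
        ((hP t ht).const_smul ((((m:ℂ) + 1)) * (ω + 1)⁻¹))
      refine h1.congr_deriv (Eq.symm ?_)
      have e1 : ω + 1 - 1 = ω := by ring
      rw [e1]
      simp only [smul_eq_mul, Nat.add_sub_cancel]
      push_cast
      field_simp
      ring

lemma antider_mem {p : ℝ → ℂ} (hp : p ∈ logExpSpan) :
    ∃ P ∈ logExpSpan, ∀ t : ℝ, 0 < t → HasDerivAt P (p t) t := by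
  induction hp using Submodule.span_induction with
  | mem f hf =>
    obtain ⟨m, ω, rfl⟩ := hf
    exact antider_ee m ω
  | zero =>
    exact ⟨0, Submodule.zero_mem _, fun t ht => by simpa using hasDerivAt_const t (0:ℂ)⟩
  | add f g hf hg ihf ihg =>
    obtain ⟨P, hPm, hP⟩ := ihf
    obtain ⟨Q, hQm, hQ⟩ := ihg
    exact ⟨P + Q, Submodule.add_mem _ hPm hQm, fun t ht => (hP t ht).add (hQ t ht)⟩
  | smul c f hf ihf =>
    obtain ⟨P, hPm, hP⟩ := ihf
    exact ⟨c • P, Submodule.smul_mem _ _ hPm, fun t ht => (hP t ht).const_smul c⟩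

lemma const_of_deriv_zero {f : ℝ → ℂ} (hf : ∀ t : ℝ, 0 < t → HasDerivAt f 0 t) :
    ∀ t : ℝ, 0 < t → f t = f 1 := by
  have key : ∀ s : ℝ, (f ∘ Real.exp) s = (f ∘ Real.exp) 0 := by
    have hder : ∀ s : ℝ, HasDerivAt (f ∘ Real.exp) 0 s := by
      intro s
      have := (hf _ (Real.exp_pos s)).scomp s (Real.hasDerivAt_exp s)
      simpa using this
    intro s
    exact is_const_of_deriv_eq_zero (fun s => (hder s).differentiableAt)
      (fun s => (hder s).deriv) s 0
  intro t ht
  have h1 := key (Real.log t)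
  simpa [Function.comp, Real.exp_log ht, Real.exp_zero] using h1

lemma eq_add_const {W P c : ℝ → ℂ} (hW : ∀ t : ℝ, 0 < t → HasDerivAt W (c t) t)
    (hP : ∀ t : ℝ, 0 < t → HasDerivAt P (c t) t) :
    ∀ t : ℝ, 0 < t → W t = P t + (W 1 - P 1) := by
  have h := const_of_deriv_zero (f := fun t => W t - P t)
    (fun t ht => ((hW t ht).sub (hP t ht)).congr_deriv (sub_self _))
  intro t ht
  have := h t ht
  linear_combination this

lemma ee_ne_zero (ω : ℂ) (t : ℝ) : ee 0 ω t ≠ 0 := by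
  simp [ee, Complex.exp_ne_zero]

lemma key_ode (lam : ℂ) (z b : ℝ → ℂ)
    (hz1 : ∀ t : ℝ, 0 < t → DifferentiableAt ℝ z t)
    (hz2 : ∀ t : ℝ, 0 < t → DifferentiableAt ℝ (deriv z) t)
    (hb : b ∈ logExpSpan)
    (heq : ∀ t : ℝ, 0 < t →
      deriv (deriv z) t = (-lam * z t + b t) / (4 * (t : ℂ) ^ 2)) :
    ∃ w ∈ logExpSpan, ∀ t : ℝ, 0 < t → z t = w t := by
  obtain ⟨r, hrr⟩ : ∃ r : ℂ, r * (r - 1) = -lam / 4 := by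
    obtain ⟨μ, hμ⟩ : ∃ μ : ℂ, μ ^ 2 = 1 - lam :=
      ⟨(1 - lam) ^ (((2:ℕ) : ℂ)⁻¹), Complex.cpow_nat_inv_pow _ two_ne_zero⟩
    exact ⟨(1 + μ) / 2, by linear_combination hμ / 4⟩
  have hu : ∀ t : ℝ, 0 < t → HasDerivAt (ee 0 r) (r * ee 0 (r - 1) t) t := by
    intro t ht
    simpa using hasDerivAt_ee 0 r ht
  have hu' : ∀ t : ℝ, 0 < t →
      HasDerivAt (fun t => r * ee 0 (r - 1) t) (r * ((r - 1) * ee 0 (r - 2) t)) t := by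
    intro t ht
    have := (hasDerivAt_ee 0 (r - 1) ht).const_mul r
    have e1 : r - 1 - 1 = r - 2 := by ring
    simpa [e1] using this
  have e2 : ∀ t : ℝ, 0 < t → ee 0 (r - 2) t = ee 0 r t * (t : ℂ)⁻¹ * (t : ℂ)⁻¹ := by
    intro t ht
    have a1 : r - 2 = r - 1 - 1 := by ring
    rw [a1, ee_sub_one 0 (r-1) ht, ee_sub_one 0 r ht]
  -- the Wronskian W t = z' t * u t - z t * u' t has derivative c₁ t = b t * u t / (4 t²)
  have hc₁mem : ((4 : ℂ)⁻¹ • fun t => ee 0 (r - 2) t * b t) ∈ logExpSpan :=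
    Submodule.smul_mem _ _ (mul_mem' 0 (r - 2) hb)
  have hWd : ∀ t : ℝ, 0 < t →
      HasDerivAt (fun t => deriv z t * ee 0 r t - z t * (r * ee 0 (r - 1) t))
        (((4 : ℂ)⁻¹ • fun t => ee 0 (r - 2) t * b t) t) t := by
    intro t ht
    have htC : (t : ℂ) ≠ 0 := by exact_mod_cast ht.ne'
    have h1 : HasDerivAt z (deriv z t) t := (hz1 t ht).hasDerivAt
    have h2 : HasDerivAt (deriv z) (deriv (deriv z) t) t := (hz2 t ht).hasDerivAt
    have hD := (h2.mul (hu t ht)).sub (h1.mul (hu' t ht))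
    refine hD.congr_deriv (Eq.symm ?_)
    rw [heq t ht, e2 t ht]
    simp only [Pi.smul_apply, smul_eq_mul]
    rw [e2 t ht]
    field_simp
    ring_nf
    linear_combination (4 * ee 0 r t * z t) * hrr
  obtain ⟨P, hPmem, hPd⟩ := antider_mem hc₁mem
  have hWP := eq_add_const hWd hPd
  set C : ℂ := (deriv z 1 * ee 0 r 1 - z 1 * (r * ee 0 (r - 1) 1)) - P 1 with hC_def
  have hQmem : (P + fun _ : ℝ => C) ∈ logExpSpan := Submodule.add_mem _ hPmem (const_mem _)
  have hWQ : ∀ t : ℝ, 0 < t →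
      deriv z t * ee 0 r t - z t * (r * ee 0 (r - 1) t) = (P + fun _ : ℝ => C) t := by
    intro t ht
    have := hWP t ht
    simpa [hC_def] using this
  -- now z / u
  have hc₂mem : (fun t => ee 0 (-(2 * r)) t * (P + fun _ : ℝ => C) t) ∈ logExpSpan :=
    mul_mem' 0 (-(2 * r)) hQmem
  have huneg : ∀ t : ℝ, ee 0 (-(2 * r)) t * (ee 0 r t) ^ 2 = 1 := by
    intro t
    have h : ee 0 (-(2 * r)) t * (ee 0 r t) ^ 2
        = Complex.exp (-(2 * r) * (Real.log t : ℂ)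
            + (r * (Real.log t : ℂ) + r * (Real.log t : ℂ))) := by
      simp [ee, sq, Complex.exp_add]
    rw [h, show -(2 * r) * (Real.log t : ℂ)
        + (r * (Real.log t : ℂ) + r * (Real.log t : ℂ)) = 0 by ring, Complex.exp_zero]
  have hVd : ∀ t : ℝ, 0 < t → HasDerivAt (fun t => z t / ee 0 r t)
      ((fun t => ee 0 (-(2 * r)) t * (P + fun _ : ℝ => C) t) t) t := by
    intro t ht
    have h1 : HasDerivAt z (deriv z t) t := (hz1 t ht).hasDerivAt
    have hdiv := h1.div (hu t ht) (ee_ne_zero r t)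
    refine hdiv.congr_deriv (Eq.symm ?_)
    have hu2 : (ee 0 r t) ^ 2 ≠ 0 := pow_ne_zero _ (ee_ne_zero r t)
    rw [eq_div_iff hu2]
    calc ee 0 (-(2 * r)) t * (P + fun _ : ℝ => C) t * (ee 0 r t) ^ 2
        = (ee 0 (-(2 * r)) t * (ee 0 r t) ^ 2) * ((P + fun _ : ℝ => C) t) := by ring
      _ = (P + fun _ : ℝ => C) t := by rw [huneg t]; ring
      _ = deriv z t * ee 0 r t - z t * (r * ee 0 (r - 1) t) := (hWQ t ht).symm
  obtain ⟨R, hRmem, hRd⟩ := antider_mem hc₂mem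
  have hVR := eq_add_const hVd hRd
  have hSmem : (R + fun _ : ℝ => (z 1 / ee 0 r 1 - R 1)) ∈ logExpSpan :=
    Submodule.add_mem _ hRmem (const_mem _)
  refine ⟨fun t => ee 0 r t * (R + fun _ : ℝ => (z 1 / ee 0 r 1 - R 1)) t,
    mul_mem' 0 r hSmem, fun t ht => ?_⟩
  have h3 := hVR t ht
  show z t = ee 0 r t * (R + fun _ : ℝ => (z 1 / ee 0 r 1 - R 1)) t
  have h4 : (R + fun _ : ℝ => (z 1 / ee 0 r 1 - R 1)) t = z t / ee 0 r t := by
    simp only [Pi.add_apply]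
    exact h3.symm
  rw [h4, mul_comm, div_mul_cancel₀ _ (ee_ne_zero r t)]

lemma sqrt_mul_ee {t : ℝ} (ht : 0 < t) :
    ((Real.sqrt t : ℝ) : ℂ) * ee 0 (-(1/2)) t = 1 := by
  have h1 : Real.sqrt t = Real.exp (Real.log t * (1/2)) := by
    rw [Real.sqrt_eq_rpow, Real.rpow_def_of_pos ht]
  rw [h1, ee]
  simp only [pow_zero, one_mul]
  rw [Complex.ofReal_exp, ← Complex.exp_add,
    show ((Real.log t * (1/2) : ℝ) : ℂ) + (-(1/2) * (Real.log t : ℂ)) = 0 by push_cast; ring]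
  exact Complex.exp_zero

/-- Jordan-block subsystem of `VE₁` for a degree `−2` potential at zero energy:
if `x'' = −λ/(4t²)·x` and `y'' = (−λ·y + x)/(4t²)` on `(0,∞)`, then
`x = √(2t)·g` and `y = √(2t)·h` with `g, h ∈ B`. -/
theorem stmt_16 (lam : ℂ) (x y : ℝ → ℂ)
    (hx1 : ∀ t : ℝ, 0 < t → DifferentiableAt ℝ x t)
    (hx2 : ∀ t : ℝ, 0 < t → DifferentiableAt ℝ (deriv x) t)
    (hy1 : ∀ t : ℝ, 0 < t → DifferentiableAt ℝ y t)
    (hy2 : ∀ t : ℝ, 0 < t → DifferentiableAt ℝ (deriv y) t)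
    (hx : ∀ t : ℝ, 0 < t →
      deriv (deriv x) t = -lam / (4 * (t : ℂ) ^ 2) * x t)
    (hy : ∀ t : ℝ, 0 < t →
      deriv (deriv y) t = (-lam * y t + x t) / (4 * (t : ℂ) ^ 2)) :
    ∃ g ∈ logExpSpan, ∃ h ∈ logExpSpan, ∀ t : ℝ, 0 < t →
      x t = (Real.sqrt (2 * t) : ℂ) * g t ∧
      y t = (Real.sqrt (2 * t) : ℂ) * h t := by
  obtain ⟨bx, hbxm, hbxe⟩ := key_ode lam x (fun _ => 0) hx1 hx2 (const_mem 0)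
    (fun t ht => by
      rw [hx t ht]
      simp only [add_zero, div_mul_eq_mul_div])
  obtain ⟨bY, hbym, hbye⟩ := key_ode lam y bx hy1 hy2 hbxm
    (fun t ht => by rw [hy t ht, hbxe t ht])
  have h2 : ((Real.sqrt 2 : ℝ) : ℂ) ≠ 0 :=
    Complex.ofReal_ne_zero.mpr (Real.sqrt_pos.mpr two_pos).ne'
  refine ⟨((Real.sqrt 2 : ℝ) : ℂ)⁻¹ • fun t => ee 0 (-(1/2)) t * bx t,
    Submodule.smul_mem _ _ (mul_mem' _ _ hbxm),
    ((Real.sqrt 2 : ℝ) : ℂ)⁻¹ • fun t => ee 0 (-(1/2)) t * bY t,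
    Submodule.smul_mem _ _ (mul_mem' _ _ hbym),
    fun t ht => ?_⟩
  have hs : ((Real.sqrt (2 * t) : ℝ) : ℂ)
      = ((Real.sqrt 2 : ℝ) : ℂ) * ((Real.sqrt t : ℝ) : ℂ) := by
    rw [← Complex.ofReal_mul, Real.sqrt_mul (by norm_num : (0:ℝ) ≤ 2)]
  have cancel : ∀ c : ℂ,
      ((Real.sqrt (2 * t) : ℝ) : ℂ) * (((Real.sqrt 2 : ℝ) : ℂ)⁻¹ * (ee 0 (-(1/2)) t * c)) = c := by
    intro c
    rw [hs]
    calc ((Real.sqrt 2 : ℝ) : ℂ) * ((Real.sqrt t : ℝ) : ℂ)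
          * (((Real.sqrt 2 : ℝ) : ℂ)⁻¹ * (ee 0 (-(1/2)) t * c))
        = (((Real.sqrt 2 : ℝ) : ℂ) * ((Real.sqrt 2 : ℝ) : ℂ)⁻¹)
          * ((((Real.sqrt t : ℝ) : ℂ)) * ee 0 (-(1/2)) t * c) := by ring
      _ = c := by rw [mul_inv_cancel₀ h2, sqrt_mul_ee ht]; ring
  constructor
  · simp only [Pi.smul_apply, smul_eq_mul]
    rw [cancel (bx t), hbxe t ht]
  · simp only [Pi.smul_apply, smul_eq_mul]
    rw [cancel (bY t), hbye t ht]
end
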